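/- arXiv:2512.22907 — 8 statements merged into one kernel-verified Lean document; each statement's English description precedes it below -/
import Mathlib

section
/- Let X ⊆ S^{d-1} (the Euclidean unit sphere in ℝ^d) with pos X = ℝ^d. If there is no subset Y ⊆ X with |Y| ≤ 2d−1 and pos Y = ℝ^d, then X = {±e₁, …, ±e_d} for some basis e₁, …, e_d of ℝ^d. -/
open scoped BigOperators

/-- The positive (conic) hull of a set: all finite nonnegative linear combinations. -/
def posHull {d : ℕ} (A : Set (EuclideanSpace ℝ (Fin d))) : Set (EuclideanSpace ℝ (Fin d)) :=
  {x | ∃ (n : ℕ) (c : Fin n → ℝ) (f : Fin n → EuclideanSpace ℝ (Fin d)),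
    (∀ i, 0 ≤ c i) ∧ (∀ i, f i ∈ A) ∧ x = ∑ i, c i • f i}

lemma mem_posHull_of_fintype {d : ℕ} {A : Set (EuclideanSpace ℝ (Fin d))} {ι : Type*} [Fintype ι]
    (c : ι → ℝ) (f : ι → EuclideanSpace ℝ (Fin d)) (hc : ∀ i, 0 ≤ c i) (hf : ∀ i, f i ∈ A) :
    (∑ i, c i • f i) ∈ posHull A := by
  classical
  refine ⟨Fintype.card ι, c ∘ (Fintype.equivFin ι).symm, f ∘ (Fintype.equivFin ι).symm,
    fun i => hc _, fun i => hf _, ?_⟩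
  rw [← Equiv.sum_comp (Fintype.equivFin ι).symm (fun i => c i • f i)]
  rfl

lemma posHull_eq_univ_of {d : ℕ} {A : Set (EuclideanSpace ℝ (Fin d))} {ι : Type*} [Fintype ι]
    (v : ι → EuclideanSpace ℝ (Fin d)) (hvA : ∀ i, v i ∈ A) (w : ι → ℝ) (hw : ∀ i, 0 < w i)
    (hdep : ∑ i, w i • v i = 0) (hspan : ⊤ ≤ Submodule.span ℝ (Set.range v)) :
    posHull A = Set.univ := by
  classical
  ext x
  simp only [Set.mem_univ, iff_true]
  obtain ⟨c, hc⟩ := (Submodule.mem_span_range_iff_exists_fun ℝ).mp (hspan (Submodule.mem_top (x := x)))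
  set M : ℝ := ∑ i, |c i| / w i with hM
  have hM0 : ∀ i, 0 ≤ |c i| / w i := fun i => div_nonneg (abs_nonneg _) (hw i).le
  have hMi : ∀ i, |c i| / w i ≤ M := fun i =>
    Finset.single_le_sum (fun j _ => hM0 j) (Finset.mem_univ i)
  have key : ∀ i, 0 ≤ c i + M * w i := by
    intro i
    have h1 : |c i| / w i ≤ M := hMi i
    have h2 : |c i| ≤ M * w i := by
      rw [div_le_iff₀ (hw i)] at h1; linarith
    have := neg_abs_le (c i); linarith
  have hx : x = ∑ i, (c i + M * w i) • v i := by
    simp only [add_smul, mul_smul, Finset.sum_add_distrib, hc, ← Finset.smul_sum, hdep,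
      smul_zero, add_zero]
  rw [hx]
  exact mem_posHull_of_fintype _ _ key hvA

lemma carath_aux {d : ℕ} (A : Set (EuclideanSpace ℝ (Fin d))) :
    ∀ (n : ℕ) (c : Fin n → ℝ) (f : Fin n → EuclideanSpace ℝ (Fin d)),
    (∀ i, 0 ≤ c i) → (∀ i, f i ∈ A) →
    ∃ (m : ℕ) (c' : Fin m → ℝ) (f' : Fin m → EuclideanSpace ℝ (Fin d)),
      (∀ i, 0 < c' i) ∧ (∀ i, f' i ∈ A) ∧ LinearIndependent ℝ f' ∧
      ∑ i, c' i • f' i = ∑ i, c i • f i := by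
  intro n
  induction n using Nat.strong_induction_on with
  | _ n ih =>
  intro c f hc hf
  -- helper: if some coefficient is zero, we can drop it
  have drop : ∀ (m : ℕ) (hm : n = m + 1) (c : Fin n → ℝ) (i₀ : Fin n), (∀ i, 0 ≤ c i) →
      c i₀ = 0 →
      ∃ (m' : ℕ) (c' : Fin m' → ℝ) (f' : Fin m' → EuclideanSpace ℝ (Fin d)),
      (∀ i, 0 < c' i) ∧ (∀ i, f' i ∈ A) ∧ LinearIndependent ℝ f' ∧
      ∑ i, c' i • f' i = ∑ i, c i • f i := by
    intro m hm
    subst hm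
    intro c i₀ hc hzero
    obtain ⟨m', c', f', h1, h2, h3, h4⟩ := ih m (by omega) (c ∘ i₀.succAbove)
      (f ∘ i₀.succAbove) (fun i => hc _) (fun i => hf _)
    refine ⟨m', c', f', h1, h2, h3, ?_⟩
    rw [h4, Fin.sum_univ_succAbove (fun i => c i • f i) i₀, hzero, zero_smul, zero_add]
    rfl
  by_cases hz : ∃ i, c i = 0
  · obtain ⟨i₀, hi₀⟩ := hz
    cases n with
    | zero => exact i₀.elim0
    | succ m => exact drop m rfl c i₀ hc hi₀
  · push_neg at hz
    have hpos : ∀ i, 0 < c i := fun i => lt_of_le_of_ne (hc i) (Ne.symm (hz i))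
    by_cases hli : LinearIndependent ℝ f
    · exact ⟨n, c, f, hpos, hf, hli, rfl⟩
    · obtain ⟨g0, hg0sum, i₁, hi₁⟩ := Fintype.not_linearIndependent_iff.mp hli
      have hgex : ∃ g : Fin n → ℝ, ∑ i, g i • f i = 0 ∧ ∃ i, 0 < g i := by
        rcases lt_or_gt_of_ne hi₁ with h | h
        · exact ⟨-g0, by simp [hg0sum], i₁, by simpa using h⟩
        · exact ⟨g0, hg0sum, i₁, h⟩
      obtain ⟨g, hgsum, i₂, hgi₂⟩ := hgex
      classical
      set P : Finset (Fin n) := Finset.univ.filter (fun i => 0 < g i) with hP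
      have hPne : P.Nonempty := ⟨i₂, by simp [hP, hgi₂]⟩
      obtain ⟨i₀, hi₀P, hi₀min⟩ := Finset.exists_min_image P (fun i => c i / g i) hPne
      have hgi₀ : 0 < g i₀ := by simpa [hP] using hi₀P
      set t : ℝ := c i₀ / g i₀ with ht
      have ht0 : 0 ≤ t := div_nonneg (hc i₀) hgi₀.le
      set c'' : Fin n → ℝ := fun i => c i - t * g i with hc''
      have hc''nn : ∀ i, 0 ≤ c'' i := by
        intro i
        rcases le_or_gt (g i) 0 with h | h
        · have : t * g i ≤ 0 := mul_nonpos_of_nonneg_of_nonpos ht0 h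
          simp only [hc'']; linarith [hc i]
        · have hmem : i ∈ P := by simp [hP, h]
          have h1 : t ≤ c i / g i := hi₀min i hmem
          have h2 : t * g i ≤ c i := by
            rw [le_div_iff₀ h] at h1; linarith
          simp only [hc'']; linarith
      have hzero : c'' i₀ = 0 := by
        simp only [hc'', ht]
        field_simp
        ring
      have hsum : ∑ i, c'' i • f i = ∑ i, c i • f i := by
        simp only [hc'', sub_smul, mul_smul, Finset.sum_sub_distrib, ← Finset.smul_sum, hgsum,
          smul_zero, sub_zero]
      cases n with
      | zero => exact i₀.elim0
      | succ m =>
        obtain ⟨m', c', f', h1, h2, h3, h4⟩ := drop m rfl c'' i₀ hc''nn hzero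
        exact ⟨m', c', f', h1, h2, h3, by rw [h4, hsum]⟩

lemma hno_contra {d : ℕ} {X : Set (EuclideanSpace ℝ (Fin d))}
    (hno : ¬ ∃ Y ⊆ X, Y.Finite ∧ Y.ncard ≤ 2 * d - 1 ∧ posHull Y = Set.univ)
    {ι : Type*} [Fintype ι]
    (V : ι → EuclideanSpace ℝ (Fin d)) (W : ι → ℝ)
    (hVX : ∀ i, V i ∈ X) (hW : ∀ i, 0 ≤ W i)
    (hdep : ∑ i, W i • V i = 0)
    (hspan : ⊤ ≤ Submodule.span ℝ (V '' {i | 0 < W i}))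
    (hcard : (V '' {i | 0 < W i}).ncard ≤ 2 * d - 1) : False := by
  classical
  set N : Finset ι := Finset.univ.filter (fun i => 0 < W i) with hN
  have hNcoe : V '' {i | 0 < W i} = V '' ↑N := by
    congr 1; ext i; simp [hN]
  apply hno
  refine ⟨V '' {i | 0 < W i}, ?_, (Set.toFinite _).image V, hcard, ?_⟩
  · rintro x ⟨i, _, rfl⟩
    exact hVX i
  · refine posHull_eq_univ_of (ι := ↥N) (fun p => V ↑p) ?_ (fun p => W ↑p) ?_ ?_ ?_
    · intro p
      exact ⟨↑p, by simpa [hN] using (Finset.mem_filter.mp p.2).2, rfl⟩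
    · intro p
      exact (Finset.mem_filter.mp p.2).2
    · rw [Finset.sum_coe_sort N (fun i => W i • V i), ← hdep]
      refine Finset.sum_subset (Finset.subset_univ N) ?_
      intro i _ hi
      have h1 : ¬ 0 < W i := by simpa [hN] using hi
      have h2 : W i = 0 := le_antisymm (not_lt.mp h1) (hW i)
      simp [h2]
    · have hsub : V '' {i | 0 < W i} ⊆ Set.range (fun p : ↥N => V ↑p) := by
        rintro x ⟨i, hi, rfl⟩
        exact ⟨⟨i, by simp only [hN, Finset.mem_filter, Finset.mem_univ, true_and]; exact hi⟩, rfl⟩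
      exact le_trans hspan (Submodule.span_mono hsub)

lemma ncard_range_le {ι α : Type*} [Fintype ι] (f : ι → α) :
    (Set.range f).ncard ≤ Fintype.card ι := by
  classical
  rw [← Set.image_univ]
  calc (f '' Set.univ).ncard ≤ (Set.univ : Set ι).ncard := Set.ncard_image_le Set.finite_univ
  _ = Fintype.card ι := by rw [Set.ncard_univ, Nat.card_eq_fintype_card]

set_option maxHeartbeats 2000000 in
theorem steinitz_equality_case (d : ℕ) (X : Set (EuclideanSpace ℝ (Fin d)))
    (hXs : X ⊆ Metric.sphere (0 : EuclideanSpace ℝ (Fin d)) 1)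
    (hX : posHull X = Set.univ)
    (hno : ¬ ∃ Y ⊆ X, Y.Finite ∧ Y.ncard ≤ 2 * d - 1 ∧ posHull Y = Set.univ) :
    ∃ e : Fin d → EuclideanSpace ℝ (Fin d),
      LinearIndependent ℝ e ∧ Submodule.span ℝ (Set.range e) = ⊤ ∧
      X = Set.range e ∪ (-(Set.range e)) := by
  classical
  -- dispose of d = 0
  rcases Nat.eq_zero_or_pos d with hd | hd
  · exfalso
    apply hno
    refine ⟨∅, Set.empty_subset X, Set.finite_empty, by simp, ?_⟩
    ext x
    simp only [Set.mem_univ, iff_true]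
    refine ⟨0, ![], ![], by simp, by simp, ?_⟩
    subst hd
    have : Subsingleton (EuclideanSpace ℝ (Fin 0)) := by
      constructor; intro a b; ext i; exact i.elim0
    simp [Subsingleton.elim x 0]
  -- X spans
  have hspanX : Submodule.span ℝ X = ⊤ := by
    rw [eq_top_iff]
    intro x _
    have hx : x ∈ posHull X := hX ▸ Set.mem_univ x
    obtain ⟨n, c, f, hc, hf, rfl⟩ := hx
    exact Submodule.sum_mem _ fun i _ => Submodule.smul_mem _ _ (Submodule.subset_span (hf i))
  -- extract a basis from X
  obtain ⟨s, hsX, hspan_s, hli_s⟩ := exists_linearIndependent ℝ X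
  have hsfin : s.Finite := hli_s.setFinite
  haveI := hsfin.fintype
  let B0 : Module.Basis ↥s ℝ (EuclideanSpace ℝ (Fin d)) :=
    Module.Basis.mk hli_s (by rw [Subtype.range_coe, hspan_s, hspanX])
  have hcards : Fintype.card ↥s = d := by
    rw [← Module.finrank_eq_card_basis B0, finrank_euclideanSpace_fin]
  let B : Module.Basis (Fin d) ℝ (EuclideanSpace ℝ (Fin d)) :=
    B0.reindex (Fintype.equivFinOfCardEq hcards)
  set b : Fin d → EuclideanSpace ℝ (Fin d) := ⇑B with hbdef
  have hbX : ∀ i, b i ∈ X := by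
    intro i
    have : B i = B0 ((Fintype.equivFinOfCardEq hcards).symm i) := B0.reindex_apply _ _
    rw [hbdef, this]
    have : B0 ((Fintype.equivFinOfCardEq hcards).symm i)
        = ((Fintype.equivFinOfCardEq hcards).symm i : EuclideanSpace ℝ (Fin d)) := by
      simp [B0]
    rw [this]
    exact hsX ((Fintype.equivFinOfCardEq hcards).symm i).2
  -- Caratheodory applied to -∑ b i
  have hzmem : (-∑ i, b i) ∈ posHull X := hX ▸ Set.mem_univ _
  obtain ⟨n0, c0, f0, hc0, hf0, hz0⟩ := hzmem
  obtain ⟨k, μ, y, hμ, hyX, hyli, hysum⟩ := carath_aux X n0 c0 f0 hc0 hf0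
  have hdep0 : ∑ i, b i + ∑ j, μ j • y j = 0 := by
    rw [hysum, ← hz0]; simp
  -- counting : k = d
  have hk_le : k ≤ d := by
    have := hyli.fintype_card_le_finrank
    simpa [finrank_euclideanSpace_fin] using this
  have hkd : k = d := by
    by_contra hne
    have hklt : k ≤ d - 1 := by omega
    refine hno_contra hno (ι := Fin d ⊕ Fin k) (Sum.elim b y) (Sum.elim (fun _ => 1) μ)
      ?_ ?_ ?_ ?_ ?_
    · rintro (i | j); exacts [hbX i, hyX j]
    · rintro (i | j); exacts [zero_le_one, (hμ j).le]
    · rw [Fintype.sum_sum_type]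
      simpa using hdep0
    · rw [← B.span_eq]
      apply Submodule.span_mono
      rintro v ⟨i, rfl⟩
      exact ⟨Sum.inl i, by norm_num, rfl⟩
    · calc (Sum.elim b y '' {i | 0 < Sum.elim (fun _ : Fin d => (1:ℝ)) μ i}).ncard
          ≤ (Set.range (Sum.elim b y)).ncard :=
            Set.ncard_le_ncard (Set.image_subset_range _ _) (Set.finite_range _)
      _ ≤ Fintype.card (Fin d ⊕ Fin k) := ncard_range_le _
      _ ≤ 2 * d - 1 := by simp; omega
  subst hkd
  haveI : Nonempty (Fin k) := ⟨⟨0, hd⟩⟩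
  let C : Module.Basis (Fin k) ℝ (EuclideanSpace ℝ (Fin k)) :=
    basisOfLinearIndependentOfCardEqFinrank hyli (by simp)
  have hC : ⇑C = y := coe_basisOfLinearIndependentOfCardEqFinrank _ _
  have hyspan : Submodule.span ℝ (Set.range y) = ⊤ := by rw [← hC]; exact C.span_eq
  set a : Fin k → Fin k → ℝ := fun i j => B.repr (y j) i with hadef
  have hya : ∀ j, y j = ∑ i, a i j • b i := fun j => (B.sum_repr (y j)).symm
  set cm : Fin k → Fin k → ℝ := fun j i => C.repr (b i) j with hcmdef
  have hbc : ∀ i, b i = ∑ j, cm j i • y j := by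
    intro i
    conv_lhs => rw [← C.sum_repr (b i)]
    simp only [hC, hcmdef]
  have hbnorm : ∀ i, ‖b i‖ = 1 := fun i => mem_sphere_zero_iff_norm.mp (hXs (hbX i))
  have hynorm : ∀ j, ‖y j‖ = 1 := fun j => mem_sphere_zero_iff_norm.mp (hXs (hyX j))
  -- the coordinate matrix of y in b is nonpositive
  have ha_nonpos : ∀ i j, a i j ≤ 0 := by
    by_contra hcon
    push_neg at hcon
    obtain ⟨i₀, j₀, hpos⟩ := hcon
    have hune : (Finset.univ : Finset (Fin k)).Nonempty := ⟨i₀, Finset.mem_univ _⟩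
    set m : ℝ := Finset.univ.sup' hune (fun i => a i j₀) with hmdef
    have hm_ge : ∀ i, a i j₀ ≤ m := by
      intro i; rw [hmdef]; exact Finset.le_sup' (fun i => a i j₀) (Finset.mem_univ i)
    have hm_pos : 0 < m := lt_of_lt_of_le hpos (hm_ge i₀)
    obtain ⟨i₁, -, hi₁⟩ := Finset.exists_mem_eq_sup' hune (fun i => a i j₀)
    refine hno_contra hno (ι := Fin k ⊕ Fin k)
      (Sum.elim b y)
      (Sum.elim (fun i => 1 - a i j₀ / m) (fun j => μ j + if j = j₀ then 1/m else 0))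
      ?_ ?_ ?_ ?_ ?_
    · rintro (i | j); exacts [hbX i, hyX j]
    · rintro (i | j)
      · simp only [Sum.elim_inl]
        rw [sub_nonneg, div_le_one hm_pos]
        exact hm_ge i
      · simp only [Sum.elim_inr]
        have h0 : (0:ℝ) ≤ if j = j₀ then 1/m else 0 := by positivity
        linarith [hμ j]
    · rw [Fintype.sum_sum_type]
      simp only [Sum.elim_inl, Sum.elim_inr]
      have e1 : ∑ i, (1 - a i j₀ / m) • b i = (∑ i, b i) - (1/m) • y j₀ := by
        rw [hya j₀, Finset.smul_sum, ← Finset.sum_sub_distrib]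
        refine Finset.sum_congr rfl fun i _ => ?_
        rw [sub_smul, one_smul, smul_smul]
        congr 2
        field_simp
      have e2 : ∑ j, (μ j + if j = j₀ then 1/m else 0) • y j
          = (∑ j, μ j • y j) + (1/m) • y j₀ := by
        simp only [add_smul, ite_smul, zero_smul]
        rw [Finset.sum_add_distrib, Finset.sum_ite_eq' Finset.univ j₀ (fun j => (1/m) • y j)]
        simp
      rw [e1, e2]
      have h3 : (∑ i, b i) - (1/m) • y j₀ + ((∑ j, μ j • y j) + (1/m) • y j₀)
          = (∑ i, b i) + ∑ j, μ j • y j := by abel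
      rw [h3, hdep0]
    · rw [← hyspan]
      apply Submodule.span_mono
      rintro v ⟨j, rfl⟩
      refine ⟨Sum.inr j, ?_, rfl⟩
      show 0 < Sum.elim (fun i => 1 - a i j₀ / m) (fun j => μ j + if j = j₀ then 1/m else 0) (Sum.inr j)
      simp only [Sum.elim_inr]
      have h0 : (0:ℝ) ≤ if j = j₀ then 1/m else 0 := by positivity
      linarith [hμ j]
    · have hsub : (Sum.elim b y ''
          {p | 0 < Sum.elim (fun i => 1 - a i j₀ / m) (fun j => μ j + if j = j₀ then 1/m else 0) p})
          ⊆ Sum.elim b y '' (Set.univ \ {Sum.inl i₁}) := by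
        apply Set.image_mono
        rintro p hp
        refine ⟨Set.mem_univ _, ?_⟩
        simp only [Set.mem_singleton_iff]
        rintro rfl
        simp only [Set.mem_setOf_eq, Sum.elim_inl] at hp
        rw [← hi₁, div_self hm_pos.ne'] at hp
        simp at hp
      calc (Sum.elim b y ''
          {p | 0 < Sum.elim (fun i => 1 - a i j₀ / m) (fun j => μ j + if j = j₀ then 1/m else 0) p}).ncard
          ≤ (Sum.elim b y '' (Set.univ \ {Sum.inl i₁})).ncard :=
            Set.ncard_le_ncard hsub ((Set.toFinite _).image _)
        _ ≤ (Set.univ \ {Sum.inl i₁} : Set (Fin k ⊕ Fin k)).ncard :=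
            Set.ncard_image_le (Set.toFinite _)
        _ ≤ 2 * k - 1 := by
            rw [Set.ncard_diff_singleton_of_mem (Set.mem_univ _), Set.ncard_univ,
              Nat.card_eq_fintype_card]
            simp only [Fintype.card_sum, Fintype.card_fin]
            omega
  -- the coordinate matrix of b in y is nonpositive
  have hc_nonpos : ∀ j i, cm j i ≤ 0 := by
    by_contra hcon
    push_neg at hcon
    obtain ⟨j₀, i₀, hpos⟩ := hcon
    set P : Finset (Fin k) := Finset.univ.filter (fun j => 0 < cm j i₀) with hPdef
    have hPne : P.Nonempty := ⟨j₀, by simp [hPdef]; exact hpos⟩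
    obtain ⟨j₁, hj₁P, hj₁min⟩ := Finset.exists_min_image P (fun j => μ j / cm j i₀) hPne
    have hcj₁ : 0 < cm j₁ i₀ := by
      have := hj₁P; simp [hPdef] at this; exact this
    set ε : ℝ := μ j₁ / cm j₁ i₀ with hεdef
    have hε : 0 < ε := div_pos (hμ j₁) hcj₁
    refine hno_contra hno (ι := Fin k ⊕ Fin k)
      (Sum.elim b y)
      (Sum.elim (fun i => 1 + if i = i₀ then ε else 0) (fun j => μ j - ε * cm j i₀))
      ?_ ?_ ?_ ?_ ?_
    · rintro (i | j); exacts [hbX i, hyX j]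
    · rintro (i | j)
      · simp only [Sum.elim_inl]
        have h0 : (0:ℝ) ≤ if i = i₀ then ε else 0 := by positivity
        linarith
      · simp only [Sum.elim_inr]
        rcases le_or_gt (cm j i₀) 0 with h | h
        · nlinarith [hμ j]
        · have hmem : j ∈ P := by simp [hPdef]; exact h
          have h1 : ε ≤ μ j / cm j i₀ := hj₁min j hmem
          rw [le_div_iff₀ h] at h1
          linarith
    · rw [Fintype.sum_sum_type]
      simp only [Sum.elim_inl, Sum.elim_inr]
      have e1 : ∑ i, (1 + if i = i₀ then ε else 0) • b i = (∑ i, b i) + ε • b i₀ := by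
        simp only [add_smul, one_smul, ite_smul, zero_smul]
        rw [Finset.sum_add_distrib, Finset.sum_ite_eq' Finset.univ i₀ (fun i => ε • b i)]
        simp
      have e2 : ∑ j, (μ j - ε * cm j i₀) • y j = (∑ j, μ j • y j) - ε • b i₀ := by
        conv_rhs => rw [hbc i₀]
        rw [Finset.smul_sum, ← Finset.sum_sub_distrib]
        refine Finset.sum_congr rfl fun j _ => ?_
        rw [sub_smul, smul_smul]
      rw [e1, e2]
      have h3 : (∑ i, b i) + ε • b i₀ + ((∑ j, μ j • y j) - ε • b i₀)
          = (∑ i, b i) + ∑ j, μ j • y j := by abel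
      rw [h3, hdep0]
    · rw [← B.span_eq]
      apply Submodule.span_mono
      rintro v ⟨i, rfl⟩
      refine ⟨Sum.inl i, ?_, rfl⟩
      show 0 < Sum.elim (fun i => 1 + if i = i₀ then ε else 0) (fun j => μ j - ε * cm j i₀) (Sum.inl i)
      simp only [Sum.elim_inl]
      have h0 : (0:ℝ) ≤ if i = i₀ then ε else 0 := by positivity
      linarith
    · have hsub : (Sum.elim b y ''
          {p | 0 < Sum.elim (fun i => 1 + if i = i₀ then ε else 0) (fun j => μ j - ε * cm j i₀) p})
          ⊆ Sum.elim b y '' (Set.univ \ {Sum.inr j₁}) := by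
        apply Set.image_mono
        rintro p hp
        refine ⟨Set.mem_univ _, ?_⟩
        simp only [Set.mem_singleton_iff]
        rintro rfl
        simp only [Set.mem_setOf_eq, Sum.elim_inr] at hp
        rw [hεdef] at hp
        rw [div_mul_cancel₀ _ hcj₁.ne'] at hp
        simp at hp
      calc (Sum.elim b y ''
          {p | 0 < Sum.elim (fun i => 1 + if i = i₀ then ε else 0) (fun j => μ j - ε * cm j i₀) p}).ncard
          ≤ (Sum.elim b y '' (Set.univ \ {Sum.inr j₁})).ncard :=
            Set.ncard_le_ncard hsub ((Set.toFinite _).image _)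
        _ ≤ (Set.univ \ {Sum.inr j₁} : Set (Fin k ⊕ Fin k)).ncard :=
            Set.ncard_image_le (Set.toFinite _)
        _ ≤ 2 * k - 1 := by
            rw [Set.ncard_diff_singleton_of_mem (Set.mem_univ _), Set.ncard_univ,
              Nat.card_eq_fintype_card]
            simp only [Fintype.card_sum, Fintype.card_fin]
            omega
  -- coordinate evaluation lemma
  have hevalB : ∀ (t : Fin k → ℝ) (i : Fin k), B.repr (∑ i', t i' • b i') i = t i := by
    intro t i
    rw [map_sum]
    simp only [map_smul, Finsupp.finset_sum_apply, Finsupp.smul_apply, hbdef,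
      Module.Basis.repr_self_apply, smul_eq_mul, mul_ite, mul_one, mul_zero]
    rw [Finset.sum_ite_eq' Finset.univ i t]
    simp
  -- the product identity
  have key : ∀ i' i, (∑ j, cm j i' * a i j) = if i' = i then 1 else 0 := by
    intro i' i
    have h1 : b i' = ∑ i, (∑ j, cm j i' * a i j) • b i := by
      calc b i' = ∑ j, cm j i' • y j := hbc i'
      _ = ∑ j, cm j i' • (∑ i, a i j • b i) := by
          refine Finset.sum_congr rfl fun j _ => ?_; rw [← hya j]
      _ = ∑ j, ∑ i, (cm j i' * a i j) • b i := by
          refine Finset.sum_congr rfl fun j _ => ?_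
          rw [Finset.smul_sum]
          refine Finset.sum_congr rfl fun i _ => ?_
          rw [smul_smul]
      _ = ∑ i, ∑ j, (cm j i' * a i j) • b i := Finset.sum_comm
      _ = ∑ i, (∑ j, cm j i' * a i j) • b i := by
          refine Finset.sum_congr rfl fun i _ => ?_
          rw [Finset.sum_smul]
    have h2 := hevalB (fun i => ∑ j, cm j i' * a i j) i
    rw [← h1] at h2
    rw [← h2, hbdef, Module.Basis.repr_self_apply]
  -- each column of a has a nonzero entry
  have hcolnz : ∀ j, ∃ i, a i j ≠ 0 := by
    intro j
    by_contra hz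
    push_neg at hz
    have : y j = 0 := by
      rw [hya j]
      refine Finset.sum_eq_zero fun i _ => ?_
      rw [hz i, zero_smul]
    exact hyli.ne_zero j this
  -- each column of a has a unique nonzero entry
  have huniq : ∀ j i i', a i j ≠ 0 → a i' j ≠ 0 → i = i' := by
    intro j i i' hi hi'
    by_contra hne
    have hrow : ∀ i'', cm j i'' = 0 := by
      intro i''
      have hstar : ∃ is, a is j ≠ 0 ∧ is ≠ i'' := by
        by_cases h : i = i''
        · exact ⟨i', hi', fun hc => hne (h.trans hc.symm)⟩
        · exact ⟨i, hi, h⟩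
      obtain ⟨is, his, hisne⟩ := hstar
      have hsum0 : ∑ j', cm j' i'' * a is j' = 0 := by
        rw [key i'' is, if_neg (Ne.symm hisne)]
      have hterm := (Finset.sum_eq_zero_iff_of_nonneg
        (fun j' _ => by nlinarith [hc_nonpos j' i'', ha_nonpos is j'])).mp
        hsum0 j (Finset.mem_univ j)
      exact (mul_eq_zero.mp hterm).resolve_right his
    have hy_span : y j ∈ Submodule.span ℝ (Set.range b) := by
      have hsp : Submodule.span ℝ (Set.range b) = ⊤ := by rw [hbdef]; exact B.span_eq
      rw [hsp]; trivial
    obtain ⟨t, ht⟩ := (Submodule.mem_span_range_iff_exists_fun ℝ).mp hy_span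
    have h1 : C.repr (y j) j = 1 := by
      rw [← hC, Module.Basis.repr_self_apply, if_pos rfl]
    have h2 : C.repr (y j) j = ∑ i, t i * cm j i := by
      rw [← ht, map_sum]
      simp only [map_smul, Finsupp.finset_sum_apply, Finsupp.smul_apply, smul_eq_mul]
      rfl
    rw [h2] at h1
    simp only [hrow, mul_zero, Finset.sum_const_zero] at h1
    exact one_ne_zero h1.symm
  -- define the permutation
  choose σ hσ using hcolnz
  have hσu : ∀ j i, i ≠ σ j → a i j = 0 := by
    intro j i h
    by_contra h'
    exact h (huniq j i (σ j) h' (hσ j))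
  have hyb : ∀ j, y j = a (σ j) j • b (σ j) := by
    intro j
    rw [hya j, Finset.sum_eq_single (σ j)]
    · intro i _ h
      rw [hσu j i h, zero_smul]
    · intro h
      exact absurd (Finset.mem_univ _) h
  have haσ : ∀ j, a (σ j) j = -1 := by
    intro j
    have hnorm1 : |a (σ j) j| = 1 := by
      have h := hynorm j
      rw [hyb j, norm_smul, hbnorm, mul_one, Real.norm_eq_abs] at h
      exact h
    rcases (abs_eq (zero_le_one)).mp hnorm1 with h | h
    · exfalso
      have := ha_nonpos (σ j) j
      rw [h] at this
      linarith
    · exact h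
  have hyneg : ∀ j, y j = -(b (σ j)) := by
    intro j
    rw [hyb j, haσ j, neg_smul, one_smul]
  have hσinj : Function.Injective σ := by
    intro j j' h
    apply hyli.injective
    rw [hyneg j, hyneg j', h]
  have hσsurj : Function.Surjective σ := Finite.surjective_of_injective hσinj
  have hnegbX : ∀ i, -(b i) ∈ X := by
    intro i
    obtain ⟨j, rfl⟩ := hσsurj i
    rw [← hyneg j]
    exact hyX j
  -- every element of X is ± a basis vector
  have hmem : ∀ x ∈ X, x ∈ Set.range b ∪ (-(Set.range b)) := by
    intro x hx
    set lam : Fin k → ℝ := fun i => B.repr x i with hlam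
    have hxsum : x = ∑ i, lam i • b i := (B.sum_repr x).symm
    set sg : Fin k → ℝ := fun i => if 0 ≤ lam i then 1 else -1 with hsg
    have hsig : ∀ i, |lam i| • (sg i • b i) = lam i • b i := by
      intro i
      rw [smul_smul]
      congr 1
      simp only [hsg]
      rcases le_or_gt 0 (lam i) with h | h
      · rw [if_pos h, abs_of_nonneg h, mul_one]
      · rw [if_neg (not_le.mpr h), abs_of_neg h]; ring
    have hsgmemX : ∀ i, sg i • b i ∈ X := by
      intro i
      simp only [hsg]
      rcases le_or_gt 0 (lam i) with h | h
      · rw [if_pos h, one_smul]; exact hbX i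
      · rw [if_neg (not_le.mpr h), neg_smul, one_smul]; exact hnegbX i
    have hsgmemX' : ∀ i, -(sg i • b i) ∈ X := by
      intro i
      simp only [hsg]
      rcases le_or_gt 0 (lam i) with h | h
      · rw [if_pos h, one_smul]; exact hnegbX i
      · rw [if_neg (not_le.mpr h), neg_smul, one_smul, neg_neg]; exact hbX i
    by_cases htwo : ∃ i₁ i₂, i₁ ≠ i₂ ∧ lam i₁ ≠ 0 ∧ lam i₂ ≠ 0
    · exfalso
      obtain ⟨i₁, i₂, hne12, hl1, hl2⟩ := htwo
      have hk2 : 2 ≤ k := by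
        have h := Fintype.one_lt_card_iff.mpr ⟨i₁, i₂, hne12⟩
        simp at h; omega
      have hsx : x = ∑ i, |lam i| • (sg i • b i) := by
        rw [hxsum]
        exact (Finset.sum_congr rfl fun i _ => hsig i).symm
      refine hno_contra hno (ι := Unit ⊕ Fin k ⊕ Fin k)
        (Sum.elim (fun _ : Unit => x) (Sum.elim (fun i => -(sg i • b i))
          (fun i => if i = i₁ ∨ i = i₂ then x else sg i • b i)))
        (Sum.elim (fun _ : Unit => (1:ℝ)) (Sum.elim
          (fun i => |lam i| + if i = i₁ ∨ i = i₂ then 0 else 1)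
          (fun i => if i = i₁ ∨ i = i₂ then 0 else 1)))
        ?_ ?_ ?_ ?_ ?_
      · rintro (u | i | i)
        · exact hx
        · exact hsgmemX' i
        · simp only [Sum.elim_inr]
          split_ifs
          · exact hx
          · exact hsgmemX i
      · rintro (u | i | i)
        · exact zero_le_one
        · simp only [Sum.elim_inl, Sum.elim_inr]
          have h0 : (0:ℝ) ≤ if i = i₁ ∨ i = i₂ then 0 else 1 := by split_ifs <;> norm_num
          have := abs_nonneg (lam i)
          linarith
        · simp only [Sum.elim_inr]
          split_ifs <;> norm_num
      · rw [Fintype.sum_sum_type, Fintype.sum_sum_type]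
        simp only [Sum.elim_inl, Sum.elim_inr]
        have e0 : ∑ _ : Unit, (1:ℝ) • x = x := by simp
        have e1 : ∑ i, (|lam i| + if i = i₁ ∨ i = i₂ then 0 else 1) • (-(sg i • b i))
            = -(∑ i, |lam i| • (sg i • b i)) + -(∑ i, if i = i₁ ∨ i = i₂ then 0 else sg i • b i) := by
          rw [← Finset.sum_neg_distrib, ← Finset.sum_neg_distrib, ← Finset.sum_add_distrib]
          refine Finset.sum_congr rfl fun i _ => ?_
          split_ifs
          · simp [add_smul]
          · simp only [add_smul, one_smul, smul_neg]
            abel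
        have e2 : ∑ i, (if i = i₁ ∨ i = i₂ then (0:ℝ) else 1) •
              (if i = i₁ ∨ i = i₂ then x else sg i • b i)
            = ∑ i, if i = i₁ ∨ i = i₂ then 0 else sg i • b i := by
          refine Finset.sum_congr rfl fun i _ => ?_
          split_ifs
          · simp
          · simp
        rw [e0, e1, e2]
        have h4 : x + (-(∑ i, |lam i| • (sg i • b i)) +
              -(∑ i, if i = i₁ ∨ i = i₂ then 0 else sg i • b i) +
              ∑ i, if i = i₁ ∨ i = i₂ then 0 else sg i • b i)
            = x - ∑ i, |lam i| • (sg i • b i) := by abel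
        rw [h4, hsx]
        abel
      · have hsp : Submodule.span ℝ (Set.range b) = ⊤ := by rw [hbdef]; exact B.span_eq
        rw [← hsp, Submodule.span_le]
        rintro v ⟨i, rfl⟩
        have hmem1 : -(sg i • b i) ∈ (Sum.elim (fun _ : Unit => x) (Sum.elim (fun i => -(sg i • b i))
            (fun i => if i = i₁ ∨ i = i₂ then x else sg i • b i))) ''
            {p | 0 < Sum.elim (fun _ : Unit => (1:ℝ)) (Sum.elim
              (fun i => |lam i| + if i = i₁ ∨ i = i₂ then 0 else 1)
              (fun i => if i = i₁ ∨ i = i₂ then 0 else 1)) p} := by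
          refine ⟨Sum.inr (Sum.inl i), ?_, rfl⟩
          show 0 < Sum.elim (fun _ : Unit => (1:ℝ)) _ _
          simp only [Sum.elim_inr, Sum.elim_inl]
          by_cases h : i = i₁ ∨ i = i₂
          · rw [if_pos h]
            have hpos : 0 < |lam i| := by
              rcases h with h | h
              · subst h; exact abs_pos.mpr hl1
              · subst h; exact abs_pos.mpr hl2
            linarith
          · rw [if_neg h]
            have := abs_nonneg (lam i)
            linarith
        have hbi : b i = (-(sg i)) • (-(sg i • b i)) := by
          rw [smul_neg, smul_smul, neg_mul, neg_smul, neg_neg]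
          simp only [hsg]
          split_ifs <;> simp
        rw [hbi]
        exact Submodule.smul_mem _ _ (Submodule.subset_span hmem1)
      · -- cardinality bound
        have hsub : ((Sum.elim (fun _ : Unit => x) (Sum.elim (fun i => -(sg i • b i))
            (fun i => if i = i₁ ∨ i = i₂ then x else sg i • b i))) ''
            {p | 0 < Sum.elim (fun _ : Unit => (1:ℝ)) (Sum.elim
              (fun i => |lam i| + if i = i₁ ∨ i = i₂ then 0 else 1)
              (fun i => if i = i₁ ∨ i = i₂ then 0 else 1)) p}) ⊆
            {x} ∪ (Set.range (fun i => -(sg i • b i)) ∪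
              ((fun i => sg i • b i) '' {i : Fin k | ¬(i = i₁ ∨ i = i₂)})) := by
          rintro v ⟨p, hp, rfl⟩
          rcases p with u | i | i
          · exact Or.inl rfl
          · exact Or.inr (Or.inl ⟨i, rfl⟩)
          · simp only [Set.mem_setOf_eq, Sum.elim_inr] at hp
            by_cases h : i = i₁ ∨ i = i₂
            · rw [if_pos h] at hp; norm_num at hp
            · refine Or.inr (Or.inr ⟨i, h, ?_⟩)
              simp only [Sum.elim_inr, if_neg h]
        have hfin : ({x} ∪ (Set.range (fun i => -(sg i • b i)) ∪
            ((fun i => sg i • b i) '' {i : Fin k | ¬(i = i₁ ∨ i = i₂)}))).Finite :=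
          (Set.finite_singleton x).union ((Set.finite_range _).union ((Set.toFinite _).image _))
        have hsetc : {i : Fin k | ¬(i = i₁ ∨ i = i₂)} = Set.univ \ {i₁, i₂} := by
          ext i
          simp [not_or]
        calc ((Sum.elim (fun _ : Unit => x) (Sum.elim (fun i => -(sg i • b i))
            (fun i => if i = i₁ ∨ i = i₂ then x else sg i • b i))) ''
            {p | 0 < Sum.elim (fun _ : Unit => (1:ℝ)) (Sum.elim
              (fun i => |lam i| + if i = i₁ ∨ i = i₂ then 0 else 1)
              (fun i => if i = i₁ ∨ i = i₂ then 0 else 1)) p}).ncard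
            ≤ ({x} ∪ (Set.range (fun i => -(sg i • b i)) ∪
              ((fun i => sg i • b i) '' {i : Fin k | ¬(i = i₁ ∨ i = i₂)}))).ncard :=
              Set.ncard_le_ncard hsub hfin
          _ ≤ ({x} : Set (EuclideanSpace ℝ (Fin k))).ncard +
              ((Set.range (fun i => -(sg i • b i)) ∪
              ((fun i => sg i • b i) '' {i : Fin k | ¬(i = i₁ ∨ i = i₂)}))).ncard :=
              Set.ncard_union_le _ _
          _ ≤ 1 + ((Set.range (fun i => -(sg i • b i))).ncard +
              (((fun i => sg i • b i) '' {i : Fin k | ¬(i = i₁ ∨ i = i₂)})).ncard) := by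
              rw [Set.ncard_singleton]
              exact Nat.add_le_add_left (Set.ncard_union_le _ _) 1
          _ ≤ 1 + (k + (k - 2)) := by
              refine Nat.add_le_add_left (Nat.add_le_add ?_ ?_) 1
              · have h1 := ncard_range_le (fun i : Fin k => -(sg i • b i))
                simpa using h1
              · refine le_trans (Set.ncard_image_le (Set.toFinite _)) ?_
                rw [hsetc, Set.ncard_diff (Set.subset_univ _), Set.ncard_univ,
                  Nat.card_eq_fintype_card, Fintype.card_fin, Set.ncard_pair hne12]
          _ ≤ 2 * k - 1 := by omega
    · push_neg at htwo
      have hxne : x ≠ 0 := by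
        intro h
        have h1 := hXs hx
        rw [mem_sphere_zero_iff_norm, h, norm_zero] at h1
        norm_num at h1
      have hex : ∃ i₀, lam i₀ ≠ 0 := by
        by_contra h
        push_neg at h
        apply hxne
        rw [hxsum]
        exact Finset.sum_eq_zero fun i _ => by rw [h i, zero_smul]
      obtain ⟨i₀, hi₀⟩ := hex
      have hrest : ∀ i, i ≠ i₀ → lam i = 0 := fun i h => htwo i₀ i (Ne.symm h) hi₀
      have hxeq : x = lam i₀ • b i₀ := by
        rw [hxsum, Finset.sum_eq_single i₀]
        · intro i _ h
          rw [hrest i h, zero_smul]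
        · intro h
          exact absurd (Finset.mem_univ _) h
      have habs : |lam i₀| = 1 := by
        have h1 := mem_sphere_zero_iff_norm.mp (hXs hx)
        rw [hxeq, norm_smul, hbnorm, mul_one, Real.norm_eq_abs] at h1
        exact h1
      rcases (abs_eq zero_le_one).mp habs with h | h
      · left
        rw [hxeq, h, one_smul]
        exact ⟨i₀, rfl⟩
      · right
        rw [Set.mem_neg, hxeq, h]
        refine ⟨i₀, ?_⟩
        simp
  -- conclusion
  refine ⟨b, ?_, ?_, ?_⟩
  · rw [hbdef]; exact B.linearIndependent
  · rw [hbdef]; exact B.span_eq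
  · apply Set.Subset.antisymm
    · intro x hx
      exact hmem x hx
    · rintro v (⟨i, rfl⟩ | hv)
      · exact hbX i
      · rw [Set.mem_neg] at hv
        obtain ⟨i, hi⟩ := hv
        have h2 : v = -(b i) := by rw [hi, neg_neg]
        rw [h2]
        exact hnegbX i
end

section
/- Let A₁, …, A_d ⊆ ℝ^d and suppose a nonzero vector v lies in pos A_i for each i ∈ {1,…,d}. Then there exist points x_i ∈ A_i (i = 1,…,d) such that v ∈ pos {x₁, …, x_d}. -/
open scoped BigOperators

section Helpers

open scoped RealInnerProductSpace

variable {d : ℕ} {A : Set (EuclideanSpace ℝ (Fin d))}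

theorem posHull_mem_of_mem {a : EuclideanSpace ℝ (Fin d)} (ha : a ∈ A) : a ∈ posHull A :=
  ⟨1, fun _ => 1, fun _ => a, fun _ => zero_le_one, fun _ => ha, by simp⟩

theorem posHull_zero_mem : (0 : EuclideanSpace ℝ (Fin d)) ∈ posHull A :=
  ⟨0, fun i => i.elim0, fun i => i.elim0, fun i => i.elim0, fun i => i.elim0, by simp⟩

theorem posHull_add_mem {x y : EuclideanSpace ℝ (Fin d)} (hx : x ∈ posHull A)
    (hy : y ∈ posHull A) : x + y ∈ posHull A := by
  obtain ⟨n, c, f, hc, hf, rfl⟩ := hx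
  obtain ⟨m, c', f', hc', hf', rfl⟩ := hy
  refine ⟨n + m, Fin.append c c', Fin.append f f', ?_, ?_, ?_⟩
  · intro i
    refine Fin.addCases (fun j => ?_) (fun j => ?_) i
    · rw [Fin.append_left]; exact hc j
    · rw [Fin.append_right]; exact hc' j
  · intro i
    refine Fin.addCases (fun j => ?_) (fun j => ?_) i
    · rw [Fin.append_left]; exact hf j
    · rw [Fin.append_right]; exact hf' j
  · rw [Fin.sum_univ_add]
    congr 1 <;> [skip; skip] <;> apply Finset.sum_congr rfl <;> intro j _ <;>
      simp [Fin.append_left, Fin.append_right]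

theorem posHull_smul_mem {x : EuclideanSpace ℝ (Fin d)} {t : ℝ} (ht : 0 ≤ t)
    (hx : x ∈ posHull A) : t • x ∈ posHull A := by
  obtain ⟨n, c, f, hc, hf, rfl⟩ := hx
  exact ⟨n, fun i => t * c i, f, fun i => mul_nonneg ht (hc i), hf, by
    rw [Finset.smul_sum]; simp [smul_smul]⟩

theorem posHull_convex : Convex ℝ (posHull A) := by
  intro x hx y hy a b ha hb _
  exact posHull_add_mem (posHull_smul_mem ha hx) (posHull_smul_mem hb hy)

end Helpers

section Cara

variable {d : ℕ}

theorem cara_drop {m : ℕ} (c : Fin (m + 1) → ℝ) (f : Fin (m + 1) → EuclideanSpace ℝ (Fin d))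
    (i₀ : Fin (m + 1)) (h : c i₀ = 0) :
    ∑ i, c i • f i = ∑ j, c (i₀.succAbove j) • f (i₀.succAbove j) := by
  rw [Fin.sum_univ_succAbove (fun i => c i • f i) i₀, h, zero_smul, zero_add]

/-- Carathéodory for cones: any nonnegative combination can be rewritten with strictly
positive coefficients over a linearly independent subfamily. -/
theorem caratheodory_cone : ∀ (n : ℕ) (c : Fin n → ℝ) (f : Fin n → EuclideanSpace ℝ (Fin d)),
    (∀ i, 0 ≤ c i) →
    ∃ (m : ℕ) (c' : Fin m → ℝ) (f' : Fin m → EuclideanSpace ℝ (Fin d)),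
      (∀ j, 0 < c' j) ∧ LinearIndependent ℝ f' ∧ (∀ j, ∃ i, f' j = f i) ∧
      ∑ j, c' j • f' j = ∑ i, c i • f i := by
  intro n
  induction n using Nat.strong_induction_on with
  | _ n ih =>
    intro c f hc
    by_cases h0 : ∃ i₀, c i₀ = 0
    · obtain ⟨i₀, hi₀⟩ := h0
      cases n with
      | zero => exact i₀.elim0
      | succ m =>
        obtain ⟨m', c', f', h1, h2, h3, h4⟩ :=
          ih m (Nat.lt_succ_self m) (fun j => c (i₀.succAbove j)) (fun j => f (i₀.succAbove j))
            (fun j => hc _)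
        refine ⟨m', c', f', h1, h2, fun j => ?_, ?_⟩
        · obtain ⟨i, hi⟩ := h3 j; exact ⟨_, hi⟩
        · rw [h4, cara_drop c f i₀ hi₀]
    · push_neg at h0
      have hpos : ∀ i, 0 < c i := fun i => lt_of_le_of_ne (hc i) (Ne.symm (h0 i))
      by_cases hli : LinearIndependent ℝ f
      · exact ⟨n, c, f, hpos, hli, fun j => ⟨j, rfl⟩, rfl⟩
      · -- find a relation with a positive coefficient
        obtain ⟨g, hg0, i₁, hi₁⟩ := Fintype.not_linearIndependent_iff.mp hli
        have hex : ∃ g : Fin n → ℝ, ∑ i, g i • f i = 0 ∧ ∃ i, 0 < g i := by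
          rcases lt_or_gt_of_ne hi₁ with h | h
          · exact ⟨-g, by simpa using hg0, i₁, by simpa using h⟩
          · exact ⟨g, hg0, i₁, h⟩
        clear hg0 hi₁ i₁
        obtain ⟨g, hg0, hgex⟩ := hex
        set s : Finset (Fin n) := Finset.univ.filter (fun i => 0 < g i) with hs
        have hsne : s.Nonempty := by
          obtain ⟨i, hi⟩ := hgex
          exact ⟨i, by simp [hs, hi]⟩
        obtain ⟨i₀, hi₀s, hi₀min⟩ := s.exists_min_image (fun i => c i / g i) hsne
        have hgi₀ : 0 < g i₀ := by simpa [hs] using hi₀s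
        set t : ℝ := c i₀ / g i₀ with ht
        have htpos : 0 < t := div_pos (hpos i₀) hgi₀
        set c'' : Fin n → ℝ := fun i => c i - t * g i with hc''
        have hc''nonneg : ∀ i, 0 ≤ c'' i := by
          intro i
          rcases le_or_gt (g i) 0 with h | h
          · have : t * g i ≤ 0 := mul_nonpos_of_nonneg_of_nonpos htpos.le h
            simp only [hc'']; linarith [hpos i]
          · have his : i ∈ s := by simp [hs, h]
            have := hi₀min i his
            have : t * g i ≤ c i := by
              rw [le_div_iff₀ h] at this; linarith [this]
            simp only [hc'']; linarith
        have hc''i₀ : c'' i₀ = 0 := by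
          simp only [hc'', ht]; field_simp; ring
        have hsum : ∑ i, c'' i • f i = ∑ i, c i • f i := by
          simp only [hc'', sub_smul, smul_smul, Finset.sum_sub_distrib]
          rw [show ∑ i, (t * g i) • f i = t • ∑ i, g i • f i by
            rw [Finset.smul_sum]; simp [smul_smul]]
          rw [hg0, smul_zero, sub_zero]
        cases n with
        | zero => exact i₀.elim0
        | succ m =>
          obtain ⟨m', c', f', h1, h2, h3, h4⟩ :=
            ih m (Nat.lt_succ_self m) (fun j => c'' (i₀.succAbove j))
              (fun j => f (i₀.succAbove j)) (fun j => hc''nonneg _)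
          refine ⟨m', c', f', h1, h2, fun j => ?_, ?_⟩
          · obtain ⟨i, hi⟩ := h3 j; exact ⟨_, hi⟩
          · rw [h4, ← cara_drop c'' f i₀ hc''i₀, hsum]

end Cara

section Closed

variable {d : ℕ}

theorem isClosed_piece {m k : ℕ} (y : Fin k → EuclideanSpace ℝ (Fin d)) (ι : Fin m → Fin k)
    (hli : LinearIndependent ℝ (fun j => y (ι j))) :
    IsClosed ((fun c : Fin m → ℝ => ∑ j, c j • y (ι j)) '' {c | ∀ j, 0 ≤ c j}) := by
  set L : (Fin m → ℝ) →ₗ[ℝ] EuclideanSpace ℝ (Fin d) :=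
    { toFun := fun c => ∑ j, c j • y (ι j),
      map_add' := by intro a b; simp [add_smul, Finset.sum_add_distrib],
      map_smul' := by intro r a; simp [smul_smul, Finset.smul_sum] } with hL
  have hker : LinearMap.ker L = ⊥ := by
    rw [LinearMap.ker_eq_bot']
    intro c hc
    funext j
    exact Fintype.linearIndependent_iff.mp hli c hc j
  have hce := LinearMap.isClosedEmbedding_of_injective hker
  have hcl : IsClosed {c : Fin m → ℝ | ∀ j, 0 ≤ c j} := by
    have : {c : Fin m → ℝ | ∀ j, 0 ≤ c j} = ⋂ j, {c | 0 ≤ c j} := by ext; simp [Set.mem_iInter]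
    rw [this]
    exact isClosed_iInter fun j => isClosed_le continuous_const (continuous_apply j)
  exact hce.isClosedMap _ hcl

theorem isClosed_posHull_range {k : ℕ} (y : Fin k → EuclideanSpace ℝ (Fin d)) :
    IsClosed (posHull (Set.range y)) := by
  classical
  have heq : posHull (Set.range y) = ⋃ p : (m : Fin (k + 1)) × (Fin m → Fin k),
      if LinearIndependent ℝ (fun j => y (p.2 j)) then
        (fun c : Fin p.1 → ℝ => ∑ j, c j • y (p.2 j)) '' {c | ∀ j, 0 ≤ c j} else ∅ := by
    ext x
    simp only [Set.mem_iUnion]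
    constructor
    · rintro ⟨n, c, f, hc, hf, rfl⟩
      obtain ⟨m, c', f', h1, h2, h3, h4⟩ := caratheodory_cone n c f hc
      have h5 : ∀ j, ∃ i : Fin k, f' j = y i := by
        intro j
        obtain ⟨i, hi⟩ := h3 j
        obtain ⟨i', hi'⟩ := hf i
        exact ⟨i', by rw [hi, ← hi']⟩
      choose ι hι using h5
      have hli : LinearIndependent ℝ (fun j => y (ι j)) := by
        have : (fun j => y (ι j)) = f' := funext fun j => (hι j).symm
        rw [this]; exact h2
      have hιinj : Function.Injective ι := by
        intro a b hab
        exact h2.injective (by rw [hι a, hι b, hab])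
      have hmk : m ≤ k := by
        simpa using Fintype.card_le_of_injective ι hιinj
      refine ⟨⟨⟨m, Nat.lt_succ_of_le hmk⟩, ι⟩, ?_⟩
      rw [if_pos hli]
      refine ⟨c', fun j => (h1 j).le, ?_⟩
      rw [← h4]
      exact Finset.sum_congr rfl fun j _ => by rw [hι j]
    · rintro ⟨p, hp⟩
      by_cases hli : LinearIndependent ℝ (fun j => y (p.2 j))
      · rw [if_pos hli] at hp
        obtain ⟨c, hc, rfl⟩ := hp
        exact ⟨p.1, c, fun j => y (p.2 j), hc, fun j => ⟨p.2 j, rfl⟩, rfl⟩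
      · rw [if_neg hli] at hp
        exact absurd hp (Set.notMem_empty x)
  rw [heq]
  refine isClosed_iUnion_of_finite fun p => ?_
  split
  · exact isClosed_piece y p.2 ‹_›
  · exact isClosed_empty

end Closed

section Proj

open scoped RealInnerProductSpace

theorem exists_projection {d : ℕ} {K : Set (EuclideanSpace ℝ (Fin d))} (hne : K.Nonempty)
    (hcl : IsClosed K) (hconv : Convex ℝ K) (v : EuclideanSpace ℝ (Fin d)) :
    ∃ z : EuclideanSpace ℝ (Fin d), z ∈ K ∧ (∀ w ∈ K, ‖v - z‖ ≤ ‖v - w‖) ∧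
      ∀ w ∈ K, ⟪v - z, w - z⟫ ≤ 0 := by
  obtain ⟨z, hz, hinf⟩ := exists_norm_eq_iInf_of_complete_convex hne hcl.isComplete hconv v
  have h2 := (norm_eq_iInf_iff_real_inner_le_zero hconv hz).mp hinf
  refine ⟨z, hz, fun w hw => ?_, h2⟩
  have hww := h2 w hw
  have hexp : ‖v - w‖ ^ 2 = ‖v - z‖ ^ 2 - 2 * ⟪v - z, w - z⟫ + ‖w - z‖ ^ 2 := by
    have hvw : v - w = (v - z) - (w - z) := by abel
    rw [hvw, norm_sub_sq_real]
  nlinarith [sq_nonneg ‖w - z‖, norm_nonneg (v - w), norm_nonneg (v - z)]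

end Proj

open scoped RealInnerProductSpace

set_option maxHeartbeats 1000000 in
theorem colourful_caratheodory_cone (d : ℕ) (A : Fin d → Set (EuclideanSpace ℝ (Fin d)))
    (v : EuclideanSpace ℝ (Fin d)) (hv : v ≠ 0) (hvA : ∀ i, v ∈ posHull (A i)) :
    ∃ x : Fin d → EuclideanSpace ℝ (Fin d),
      (∀ i, x i ∈ A i) ∧ v ∈ posHull (Set.range x) := by
  classical
  choose n c f hc hf hrepr using hvA
  have hn : ∀ i, 0 < n i := by
    intro i
    by_contra h
    push_neg at h
    have hni : n i = 0 := by omega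
    apply hv
    have he : IsEmpty (Fin (n i)) := by rw [hni]; infer_instance
    rw [hrepr i, Finset.univ_eq_empty, Finset.sum_empty]
  -- the finite set of colour choices
  set G := (∀ i : Fin d, Fin (n i)) with hG
  haveI : Nonempty G := ⟨fun i => ⟨0, hn i⟩⟩
  set xx : G → Fin d → EuclideanSpace ℝ (Fin d) := fun g i => f i (g i) with hxx
  set K : G → Set (EuclideanSpace ℝ (Fin d)) := fun g => posHull (Set.range (xx g)) with hK
  have hproj : ∀ g : G, ∃ z, z ∈ K g ∧ (∀ w ∈ K g, ‖v - z‖ ≤ ‖v - w‖) ∧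
      ∀ w ∈ K g, ⟪v - z, w - z⟫ ≤ 0 := fun g =>
    exists_projection ⟨0, posHull_zero_mem⟩ (isClosed_posHull_range _) posHull_convex v
  choose z hzK hzmin hzinner using hproj
  obtain ⟨g, -, hgmin⟩ := Finset.univ.exists_min_image (fun g : G => ‖v - z g‖)
    ⟨Classical.arbitrary G, Finset.mem_univ _⟩
  by_cases hzero : v = z g
  · exact ⟨xx g, fun i => hf i (g i), hzero ▸ hzK g⟩
  · exfalso
    set u := v - z g with hu
    have hune : u ≠ 0 := sub_ne_zero.mpr hzero
    have h2z : ⟪u, z g⟫ ≤ 0 := by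
      have := hzinner g ((2 : ℝ) • z g) (posHull_smul_mem (by norm_num) (hzK g))
      rwa [show (2 : ℝ) • z g - z g = z g by rw [two_smul]; abel] at this
    have h0z : (0 : ℝ) ≤ ⟪u, z g⟫ := by
      have := hzinner g 0 posHull_zero_mem
      rw [zero_sub, inner_neg_right] at this
      linarith
    have hz0 : ⟪u, z g⟫ = 0 := le_antisymm h2z h0z
    have hwle : ∀ w ∈ K g, ⟪u, w⟫ ≤ 0 := by
      intro w hw
      have := hzinner g w hw
      rw [inner_sub_right, hz0] at this
      linarith
    have huv : ⟪u, v⟫ = ‖u‖ ^ 2 := by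
      have h' : u + z g = v := by rw [hu]; abel
      rw [← h', inner_add_right, real_inner_self_eq_norm_sq, hz0, add_zero]
    have hupos : (0 : ℝ) < ‖u‖ ^ 2 := pow_pos (norm_pos_iff.mpr hune) 2
    -- Carathéodory representation of z g
    obtain ⟨n₀, c₀, f₀, hc₀, hf₀, hz₀⟩ := hzK g
    obtain ⟨m, c', f', hc'pos, hli, hmem, hsum⟩ := caratheodory_cone n₀ c₀ f₀ hc₀
    have hzg : z g = ∑ j, c' j • f' j := hz₀.trans hsum.symm
    have hmem' : ∀ j, ∃ i : Fin d, f' j = xx g i := by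
      intro j
      obtain ⟨i, hi⟩ := hmem j
      obtain ⟨i', hi'⟩ := hf₀ i
      exact ⟨i', by rw [hi, ← hi']⟩
    choose ι hι using hmem'
    have hfK : ∀ j, f' j ∈ K g := fun j => by
      rw [hι j]; exact posHull_mem_of_mem ⟨ι j, rfl⟩
    have hperp : ∀ j, ⟪u, f' j⟫ = 0 := by
      have hsz : ∑ j, c' j * ⟪u, f' j⟫ = 0 := by
        have hexp : ⟪u, z g⟫ = ∑ j, c' j * ⟪u, f' j⟫ := by
          rw [hzg, inner_sum]
          exact Finset.sum_congr rfl fun j _ => real_inner_smul_right u (f' j) (c' j)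
        rw [← hexp, hz0]
      have hle : ∀ j ∈ Finset.univ, c' j * ⟪u, f' j⟫ ≤ 0 := fun j _ =>
        mul_nonpos_of_nonneg_of_nonpos (hc'pos j).le (hwle _ (hfK j))
      intro j
      have h0 := (Finset.sum_eq_zero_iff_of_nonpos hle).mp hsz j (Finset.mem_univ j)
      have h2 := hwle (f' j) (hfK j)
      nlinarith [hc'pos j]
    -- the independent family lives in the hyperplane orthogonal to u
    have hfW : ∀ j, f' j ∈ (ℝ ∙ u)ᗮ := by
      intro j
      rw [Submodule.mem_orthogonal]
      rintro w hw
      obtain ⟨r, rfl⟩ := Submodule.mem_span_singleton.mp hw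
      rw [real_inner_smul_left, hperp j, mul_zero]
    have hliW : LinearIndependent ℝ (fun j => (⟨f' j, hfW j⟩ : (ℝ ∙ u)ᗮ)) :=
      LinearIndependent.of_comp ((ℝ ∙ u)ᗮ).subtype hli
    have hcard : m ≤ Module.finrank ℝ ((ℝ ∙ u)ᗮ) := by
      simpa using hliW.fintype_card_le_finrank
    have hrank : Module.finrank ℝ ((ℝ ∙ u)ᗮ) + 1 = d := by
      have h1 := Submodule.finrank_add_finrank_orthogonal (K := (ℝ ∙ u))
      rw [finrank_span_singleton hune, finrank_euclideanSpace_fin] at h1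
      omega
    have hmd : m < d := by omega
    have hιinj : Function.Injective ι := fun a b hab =>
      hli.injective (by rw [hι a, hι b, hab])
    have hnots : ¬Function.Surjective ι := by
      intro hs
      have := Fintype.card_le_of_surjective ι hs
      simp only [Fintype.card_fin] at this
      omega
    rw [Function.Surjective] at hnots
    push_neg at hnots
    obtain ⟨i₀, hi₀⟩ := hnots
    -- find a point of the i₀-th representation with positive inner product with u
    have hexj : ∃ jj, 0 < ⟪u, f i₀ jj⟫ := by
      by_contra hcon
      push_neg at hcon
      have hneg : ⟪u, v⟫ ≤ 0 := by
        rw [hrepr i₀, inner_sum]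
        refine Finset.sum_nonpos fun jj _ => ?_
        rw [real_inner_smul_right]
        exact mul_nonpos_of_nonneg_of_nonpos (hc i₀ jj) (hcon jj)
      rw [huv] at hneg
      linarith
    obtain ⟨jst, hjst⟩ := hexj
    set a := f i₀ jst with ha
    set g' : ∀ i, Fin (n i) := Function.update g i₀ jst with hg'
    have hxg' : ∀ i, i ≠ i₀ → xx g' i = xx g i := by
      intro i hi
      simp only [hxx, hg']
      rw [Function.update_of_ne hi]
    have hzKg' : z g ∈ K g' := by
      refine ⟨m, c', fun j => xx g' (ι j), fun j => (hc'pos j).le, fun j => ⟨ι j, rfl⟩, ?_⟩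
      rw [hzg]
      refine Finset.sum_congr rfl fun j _ => ?_
      show c' j • f' j = c' j • xx g' (ι j)
      rw [hι j, hxg' (ι j) (hi₀ j)]
    have haK : a ∈ K g' := by
      refine posHull_mem_of_mem ⟨i₀, ?_⟩
      simp only [hxx, hg', ha]
      rw [Function.update_self]
    have ha0 : a ≠ 0 := by
      intro h
      rw [h, inner_zero_right] at hjst
      exact lt_irrefl _ hjst
    have hjst' : 0 < ⟪u, a⟫ := hjst
    set t : ℝ := ⟪u, a⟫ / ‖a‖ ^ 2 with htdef
    have hna : (0 : ℝ) < ‖a‖ ^ 2 := pow_pos (norm_pos_iff.mpr ha0) 2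
    have htpos : 0 < t := div_pos hjst' hna
    set w := z g + t • a with hwdef
    have hwK : w ∈ K g' := posHull_add_mem hzKg' (posHull_smul_mem htpos.le haK)
    have hdist : ‖v - w‖ ^ 2 = ‖u‖ ^ 2 - ⟪u, a⟫ ^ 2 / ‖a‖ ^ 2 := by
      have hv_w : v - w = u - t • a := by rw [hwdef, hu]; abel
      rw [hv_w, norm_sub_sq_real, real_inner_smul_right, norm_smul]
      rw [mul_pow, Real.norm_eq_abs, sq_abs, htdef]
      field_simp
      ring
    have hlt : ‖v - w‖ < ‖v - z g‖ := by
      have h1 : ‖v - w‖ ^ 2 < ‖v - z g‖ ^ 2 := by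
        have h2 : (0 : ℝ) < ⟪u, a⟫ ^ 2 / ‖a‖ ^ 2 := div_pos (pow_pos hjst' 2) hna
        have h3 : ‖v - z g‖ ^ 2 = ‖u‖ ^ 2 := by rw [hu]
        rw [hdist, h3]
        linarith
      nlinarith [norm_nonneg (v - w), norm_nonneg (v - z g)]
    have hmin' := hgmin g' (Finset.mem_univ g')
    have hle := hzmin g' w hwK
    linarith
end

section
/- Let X₁, …, X_{2d} ⊆ ℝ^d with pos X_i = ℝ^d for each i. Then there exist points x_i ∈ X_i (i = 1, …, 2d) such that pos {x₁, …, x_{2d}} = ℝ^d. -/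
open scoped BigOperators

namespace ColourfulSteinitzAux

open Finset

variable {ι : Type*} {F : Type*} [NormedAddCommGroup F] [InnerProductSpace ℝ F]

local notation "⟪" x ", " y "⟫" => @inner ℝ _ _ x y

/-- Conic Carathéodory: a nonnegative combination can be rewritten as a nonnegative
combination over a linearly independent subfamily. -/
lemma coneCaratheodory [DecidableEq ι] (w : ι → F) :
    ∀ (n : ℕ) (s : Finset ι), s.card ≤ n → ∀ (b : ι → ℝ), (∀ j ∈ s, 0 ≤ b j) →
    ∃ t : Finset ι, t ⊆ s ∧ LinearIndependent ℝ (fun j : t => w j) ∧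
      ∃ b' : ι → ℝ, (∀ j ∈ t, 0 ≤ b' j) ∧ ∑ j ∈ t, b' j • w j = ∑ j ∈ s, b j • w j := by
  intro n
  induction n with
  | zero =>
    intro s hs b hb
    have hse : s = ∅ := Finset.card_eq_zero.mp (Nat.le_zero.mp hs)
    subst hse
    haveI : IsEmpty ((∅ : Finset ι) : Type _) := Finset.isEmpty_coe_sort.mpr rfl
    exact ⟨∅, Finset.Subset.refl _, linearIndependent_empty_type, b, by simp, rfl⟩
  | succ n ih =>
    intro s hs b hb
    by_cases hind : LinearIndependent ℝ (fun j : s => w j)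
    · exact ⟨s, Finset.Subset.refl _, hind, b, hb, rfl⟩
    · obtain ⟨g, hgsum, i0, hgi0⟩ := Fintype.not_linearIndependent_iff.mp hind
      set lam : ι → ℝ := fun j => if h : j ∈ s then g ⟨j, h⟩ else 0 with hlam
      have hlamsum : ∑ j ∈ s, lam j • w j = 0 := by
        rw [← Finset.sum_attach s (fun j => lam j • w j)]
        rw [← hgsum]
        apply Finset.sum_congr rfl
        intro j _
        simp [hlam, j.2]
      have key : ∃ mu : ι → ℝ, (∑ j ∈ s, mu j • w j = 0) ∧ ∃ j1 ∈ s, 0 < mu j1 := by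
        rcases hgi0.lt_or_gt with hneg | hpos
        · refine ⟨-lam, by simp [hlamsum], i0.1, i0.2, ?_⟩
          simp only [Pi.neg_apply, hlam, i0.2, dif_pos]
          simp only [Subtype.coe_eta]
          linarith
        · refine ⟨lam, hlamsum, i0.1, i0.2, ?_⟩
          simp only [hlam, i0.2, dif_pos]
          simpa [Subtype.coe_eta] using hpos
      obtain ⟨mu, hmusum, j1', hj1's, hj1'pos⟩ := key
      have hTne : (s.filter (fun j => 0 < mu j)).Nonempty :=
        ⟨j1', Finset.mem_filter.mpr ⟨hj1's, hj1'pos⟩⟩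
      obtain ⟨j1, hj1T, hj1min⟩ :=
        Finset.exists_min_image (s.filter (fun j => 0 < mu j)) (fun j => b j / mu j) hTne
      have hj1s : j1 ∈ s := (Finset.mem_filter.mp hj1T).1
      have hmj1 : 0 < mu j1 := (Finset.mem_filter.mp hj1T).2
      set r := b j1 / mu j1 with hr_def
      have hr : 0 ≤ r := div_nonneg (hb _ hj1s) hmj1.le
      set b2 : ι → ℝ := fun j => b j - r * mu j with hb2_def
      have hb2 : ∀ j ∈ s, 0 ≤ b2 j := by
        intro j hj
        by_cases hmu : 0 < mu j
        · have h1 := hj1min j (Finset.mem_filter.mpr ⟨hj, hmu⟩)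
          have h2 : r * mu j ≤ b j := by
            rw [le_div_iff₀ hmu] at h1
            linarith
          simp only [hb2_def]; linarith
        · push_neg at hmu
          have : r * mu j ≤ 0 := mul_nonpos_of_nonneg_of_nonpos hr hmu
          have := hb j hj
          simp only [hb2_def]; linarith
      have hb2j1 : b2 j1 = 0 := by
        simp only [hb2_def, hr_def]
        field_simp
        ring
      have hsum2 : ∑ j ∈ s, b2 j • w j = ∑ j ∈ s, b j • w j := by
        have : ∀ j ∈ s, b2 j • w j = b j • w j - r • (mu j • w j) := by
          intro j _
          simp only [hb2_def, sub_smul, smul_smul]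
        rw [Finset.sum_congr rfl this, Finset.sum_sub_distrib, ← Finset.smul_sum, hmusum,
          smul_zero, sub_zero]
      have hcard : (s.erase j1).card ≤ n := by
        have h1 := Finset.card_erase_of_mem hj1s
        have h2 : 1 ≤ s.card := Finset.card_pos.mpr ⟨j1, hj1s⟩
        omega
      obtain ⟨t, hts, hind', b', hb', hbsum'⟩ :=
        ih (s.erase j1) hcard b2 (fun j hj => hb2 j (Finset.mem_of_mem_erase hj))
      refine ⟨t, hts.trans (Finset.erase_subset _ _), hind', b', hb', ?_⟩
      rw [hbsum', ← hsum2]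
      exact Finset.sum_erase _ (by rw [hb2j1, zero_smul])

variable [Fintype ι] [DecidableEq ι]

/-- The cone generated by a finite family of vectors. -/
def coneOf (x : ι → F) : Set F :=
  {w | ∃ a : ι → ℝ, (∀ j, 0 ≤ a j) ∧ w = ∑ j, a j • x j}

lemma coneOf_zero_mem (x : ι → F) : (0 : F) ∈ coneOf x :=
  ⟨0, fun _ => le_refl _, by simp⟩

lemma coneOf_add_mem {x : ι → F} {w1 w2 : F} (h1 : w1 ∈ coneOf x) (h2 : w2 ∈ coneOf x) :
    w1 + w2 ∈ coneOf x := by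
  obtain ⟨a1, ha1, rfl⟩ := h1
  obtain ⟨a2, ha2, rfl⟩ := h2
  exact ⟨a1 + a2, fun j => add_nonneg (ha1 j) (ha2 j), by simp [add_smul, Finset.sum_add_distrib]⟩

lemma coneOf_smul_mem {x : ι → F} {w : F} {r : ℝ} (hr : 0 ≤ r) (h : w ∈ coneOf x) :
    r • w ∈ coneOf x := by
  obtain ⟨a, ha, rfl⟩ := h
  exact ⟨fun j => r * a j, fun j => mul_nonneg hr (ha j),
    by simp [Finset.smul_sum, mul_smul]⟩

lemma coneOf_gen_mem (x : ι → F) (j : ι) : x j ∈ coneOf x := by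
  refine ⟨fun j' => if j' = j then 1 else 0, fun j' => by positivity, ?_⟩
  simp [ite_smul]

lemma coneOf_convex (x : ι → F) : Convex ℝ (coneOf x) := by
  intro w1 h1 w2 h2 a b ha hb _
  exact coneOf_add_mem (coneOf_smul_mem ha h1) (coneOf_smul_mem hb h2)

lemma coneOf_isClosed [FiniteDimensional ℝ F] (x : ι → F) : IsClosed (coneOf x) := by
  classical
  -- linear map from coefficients supported on `t`
  let L : Finset ι → ((_ : ι) → ℝ) →ₗ[ℝ] F := fun t =>
    { toFun := fun a => ∑ j ∈ t, a j • x j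
      map_add' := by intro a b; simp [add_smul, Finset.sum_add_distrib]
      map_smul' := by intro r a; simp [Finset.smul_sum, mul_smul] }
  have key : coneOf x = ⋃ t ∈ {t : Finset ι | LinearIndependent ℝ (fun j : t => x j)},
      (fun a : t → ℝ => ∑ j : t, a j • x (j : ι)) '' {a | ∀ j, 0 ≤ a j} := by
    ext v
    constructor
    · rintro ⟨a, ha, rfl⟩
      obtain ⟨t, _, hind, b', hb', hsum⟩ :=
        coneCaratheodory x (Finset.univ.card) Finset.univ (le_refl _) a (fun j _ => ha j)
      refine Set.mem_iUnion.mpr ⟨t, Set.mem_iUnion.mpr ⟨hind, ?_⟩⟩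
      refine ⟨fun j => b' j, fun j => hb' j j.2, ?_⟩
      show ∑ j : t, b' (j : ι) • x (j : ι) = _
      rw [Finset.sum_coe_sort t (fun j => b' j • x j), hsum]
    · intro hv
      obtain ⟨t, ht⟩ := Set.mem_iUnion.mp hv
      obtain ⟨_, a, ha, rfl⟩ := Set.mem_iUnion.mp ht
      refine ⟨fun j => if h : j ∈ t then a ⟨j, h⟩ else 0, fun j => ?_, ?_⟩
      · by_cases h : j ∈ t
        · simp only [dif_pos h]; exact ha _
        · simp only [dif_neg h]; exact le_refl _
      · have h1 : ∑ j : ι, (if h : j ∈ t then a ⟨j, h⟩ else 0) • x j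
            = ∑ j ∈ t, (if h : j ∈ t then a ⟨j, h⟩ else 0) • x j :=
          (Finset.sum_subset (Finset.subset_univ t)
            (fun j _ hj => by rw [dif_neg hj, zero_smul])).symm
        have h2 : ∑ j ∈ t, (if h : j ∈ t then a ⟨j, h⟩ else 0) • x j
            = ∑ j ∈ t.attach, (if h : (j : ι) ∈ t then a ⟨(j : ι), h⟩ else 0) • x (j : ι) :=
          (Finset.sum_attach t _).symm
        have h3 : ∑ j ∈ t.attach, (if h : (j : ι) ∈ t then a ⟨(j : ι), h⟩ else 0) • x (j : ι)
            = ∑ j ∈ t.attach, a j • x (j : ι) :=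
          Finset.sum_congr rfl (fun j _ => by rw [dif_pos j.2, Subtype.coe_eta])
        show ∑ j : t, a j • x (j : ι) = _
        rw [h1, h2, h3, Finset.univ_eq_attach]
  rw [key]
  apply Set.Finite.isClosed_biUnion (Set.toFinite _)
  intro t hind
  have hker : LinearMap.ker
      ({ toFun := fun a : t → ℝ => ∑ j : t, a j • x (j : ι)
         map_add' := by intro a b; simp [add_smul, Finset.sum_add_distrib]
         map_smul' := by intro r a; simp [Finset.smul_sum, mul_smul] } :
        (t → ℝ) →ₗ[ℝ] F) = ⊥ := by
    rw [LinearMap.ker_eq_bot']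
    intro a hsum
    funext j
    exact Fintype.linearIndependent_iff.mp hind a hsum j
  have hclosed : IsClosed {a : t → ℝ | ∀ j, 0 ≤ a j} := by
    have : {a : t → ℝ | ∀ j, 0 ≤ a j} = ⋂ j, {a : t → ℝ | 0 ≤ a j} := by
      ext a; simp [Set.mem_iInter]
    rw [this]
    exact isClosed_iInter (fun j => isClosed_le continuous_const (continuous_apply j))
  exact (LinearMap.isClosedEmbedding_of_injective hker).isClosedMap _ hclosed

end ColourfulSteinitzAux

namespace ColourfulSteinitzAux

open Finset

local notation "⟪" x ", " y "⟫" => @inner ℝ _ _ x y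

/-- Bárány-type colourful conic Carathéodory via distance minimisation. -/
lemma barany {d : ℕ} {v : EuclideanSpace ℝ (Fin d)} (hv : v ≠ 0) (n : Fin d → ℕ)
    (g : ∀ j, Fin (n j) → EuclideanSpace ℝ (Fin d)) (c : ∀ j, Fin (n j) → ℝ)
    (hc : ∀ j k, 0 ≤ c j k) (hvrep : ∀ j, v = ∑ k, c j k • g j k) :
    ∃ (σ : ∀ j, Fin (n j)) (a : Fin d → ℝ), (∀ j, 0 ≤ a j) ∧ v = ∑ j, a j • g j (σ j) := by
  classical
  have hd : 0 < d := by
    rcases Nat.eq_zero_or_pos d with h | h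
    · exfalso; apply hv; subst h; ext i; exact i.elim0
    · exact h
  haveI hne : ∀ j : Fin d, Nonempty (Fin (n j)) := by
    intro j
    rcases Nat.eq_zero_or_pos (n j) with h | h
    · exfalso; apply hv
      have := hvrep j
      rw [this]
      have : (Finset.univ : Finset (Fin (n j))) = ∅ := by
        apply Finset.eq_empty_of_forall_notMem; intro k; exact absurd k.2 (by omega)
      rw [this, Finset.sum_empty]
    · exact ⟨⟨0, h⟩⟩
  haveI : Nonempty (∀ j, Fin (n j)) := ⟨fun j => Classical.arbitrary _⟩
  set K : (∀ j, Fin (n j)) → Set (EuclideanSpace ℝ (Fin d)) :=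
    fun σ => coneOf (fun j => g j (σ j)) with hK
  set D : (∀ j, Fin (n j)) → ℝ := fun σ => ⨅ w : K σ, ‖v - w‖ with hD
  obtain ⟨σ0, _, hmin⟩ := Finset.exists_min_image Finset.univ D Finset.univ_nonempty
  obtain ⟨p, hpK, hpd⟩ :=
    exists_norm_eq_iInf_of_complete_convex (K := K σ0)
      ⟨0, coneOf_zero_mem (fun j => g j (σ0 j))⟩
      ((coneOf_isClosed (fun j => g j (σ0 j))).isComplete)
      (coneOf_convex (fun j => g j (σ0 j))) v
  by_cases hvq : v = p
  · obtain ⟨a, ha, hsum⟩ := hpK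
    exact ⟨σ0, a, ha, hvq.trans hsum⟩
  set u := v - p with hu_def
  have hu : u ≠ 0 := fun h => hvq (by rwa [hu_def, sub_eq_zero] at h)
  have hobt : ∀ w ∈ K σ0, ⟪u, w - p⟫ ≤ 0 :=
    (norm_eq_iInf_iff_real_inner_le_zero (coneOf_convex _) hpK).mp hpd
  set x : Fin d → EuclideanSpace ℝ (Fin d) := fun j => g j (σ0 j) with hx
  obtain ⟨b, hb, hpeq⟩ := hpK
  have hup : ⟪u, p⟫ = 0 := by
    have h1 : ⟪u, p⟫ ≤ 0 := by
      have := hobt ((2 : ℝ) • p) (coneOf_smul_mem (by norm_num) ⟨b, hb, hpeq⟩)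
      have h2 : (2 : ℝ) • p - p = p := by
        rw [two_smul]; abel
      rwa [h2] at this
    have h2 : -⟪u, p⟫ ≤ 0 := by
      have := hobt 0 (coneOf_zero_mem _)
      rwa [zero_sub, inner_neg_right] at this
    linarith
  have hux : ∀ j, ⟪u, x j⟫ ≤ 0 := by
    intro j
    have := hobt (p + x j) (coneOf_add_mem ⟨b, hb, hpeq⟩ (coneOf_gen_mem _ j))
    rwa [add_sub_cancel_left] at this
  have hterm : ∀ j ∈ Finset.univ, b j * ⟪u, x j⟫ = 0 := by
    apply (Finset.sum_eq_zero_iff_of_nonpos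
      (fun j _ => mul_nonpos_of_nonneg_of_nonpos (hb j) (hux j))).mp
    rw [← hup, hpeq, inner_sum]
    exact Finset.sum_congr rfl (fun j _ => (real_inner_smul_right _ _ _).symm)
  set s := Finset.univ.filter (fun j => b j ≠ 0) with hs
  have hsub : ∀ j ∈ s, ⟪u, x j⟫ = 0 := by
    intro j hj
    have hbj : b j ≠ 0 := (Finset.mem_filter.mp hj).2
    have := hterm j (Finset.mem_univ j)
    exact (mul_eq_zero.mp this).resolve_left hbj
  have hps : ∑ j ∈ s, b j • x j = p := by
    rw [hpeq]
    exact Finset.sum_filter_of_ne (fun j _ h hbj => h (by rw [hbj, zero_smul]))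
  obtain ⟨t, hts, hind, b', hb', hteq⟩ :=
    coneCaratheodory x s.card s (le_refl _) b (fun j _ => hb j)
  have hxW : ∀ j ∈ t, x j ∈ (Submodule.span ℝ {u})ᗮ := by
    intro j hj
    exact Submodule.mem_orthogonal_singleton_iff_inner_right.mpr (hsub j (hts hj))
  have hcardt : t.card < d := by
    set W := (Submodule.span ℝ {u})ᗮ with hW
    have hindW : LinearIndependent ℝ (fun j : t => (⟨x j, hxW j j.2⟩ : W)) := by
      apply LinearIndependent.of_comp W.subtype
      exact hind
    have hcard := hindW.fintype_card_le_finrank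
    rw [Fintype.card_coe] at hcard
    have h1 : Module.finrank ℝ (Submodule.span ℝ {u}) = 1 := finrank_span_singleton hu
    have h2 := Submodule.finrank_add_finrank_orthogonal (Submodule.span ℝ {u} :
      Submodule ℝ (EuclideanSpace ℝ (Fin d)))
    rw [h1, finrank_euclideanSpace_fin] at h2
    rw [← hW] at h2
    omega
  obtain ⟨j0, hj0⟩ : ∃ j0 : Fin d, j0 ∉ t := by
    by_contra h
    push_neg at h
    have : (Finset.univ : Finset (Fin d)) ⊆ t := fun j _ => h j
    have := Finset.card_le_card this
    simp only [Finset.card_univ, Fintype.card_fin] at this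
    omega
  have huv : 0 < ⟪u, v⟫ := by
    have hveq : v = p + u := by rw [hu_def]; abel
    rw [hveq, inner_add_right, hup, zero_add, real_inner_self_eq_norm_sq]
    exact pow_pos (norm_pos_iff.mpr hu) 2
  obtain ⟨k0, _, hk0⟩ : ∃ k0 ∈ (Finset.univ : Finset (Fin (n j0))),
      0 < c j0 k0 * ⟪u, g j0 k0⟫ := by
    apply Finset.exists_lt_of_sum_lt
    rw [Finset.sum_const_zero]
    have : ∑ k, c j0 k * ⟪u, g j0 k⟫ = ⟪u, v⟫ := by
      rw [hvrep j0, inner_sum]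
      exact Finset.sum_congr rfl (fun k _ => (real_inner_smul_right _ _ _).symm)
    rw [this]; exact huv
  set a0 := g j0 k0 with ha0_def
  have hua : 0 < ⟪u, a0⟫ := by
    by_contra h
    push_neg at h
    have := mul_nonpos_of_nonneg_of_nonpos (hc j0 k0) h
    linarith
  have ha0 : a0 ≠ 0 := by
    intro h
    rw [h, inner_zero_right] at hua
    exact lt_irrefl _ hua
  set τ := ⟪u, a0⟫ / ‖a0‖ ^ 2 with hτ_def
  have hτ : 0 < τ := div_pos hua (pow_pos (norm_pos_iff.mpr ha0) 2)
  set σ1 := Function.update σ0 j0 k0 with hσ1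
  set q := p + τ • a0 with hq_def
  have hgσ1 : ∀ j ∈ t, g j (σ1 j) = x j := fun j hj =>
    congrArg (g j)
      (Function.update_of_ne (show j ≠ j0 from fun h => hj0 (h ▸ hj)) k0 σ0)
  have hq : q ∈ K σ1 := by
    refine ⟨fun j => (if j ∈ t then b' j else 0) + (if j = j0 then τ else 0), fun j => ?_, ?_⟩
    · show 0 ≤ (if j ∈ t then b' j else 0) + (if j = j0 then τ else 0)
      have h1 : (0:ℝ) ≤ if j ∈ t then b' j else 0 := by
        by_cases h : j ∈ t
        · rw [if_pos h]; exact hb' j h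
        · rw [if_neg h]
      have h2 : (0:ℝ) ≤ if j = j0 then τ else 0 := by
        by_cases h : j = j0
        · rw [if_pos h]; exact hτ.le
        · rw [if_neg h]
      linarith
    · show q = ∑ j, ((if j ∈ t then b' j else 0) + (if j = j0 then τ else 0)) • g j (σ1 j)
      rw [hq_def]
      have hsplit : ∑ j, ((if j ∈ t then b' j else 0) + (if j = j0 then τ else 0)) • g j (σ1 j)
          = ∑ j, (if j ∈ t then b' j else 0) • g j (σ1 j)
            + ∑ j, (if j = j0 then τ else 0) • g j (σ1 j) := by
        rw [← Finset.sum_add_distrib]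
        exact Finset.sum_congr rfl (fun j _ => by rw [add_smul])
      rw [hsplit]
      congr 1
      · -- first sum equals p
        have hstep : ∀ j ∈ (Finset.univ : Finset (Fin d)),
            (if j ∈ t then b' j else 0) • g j (σ1 j) = if j ∈ t then b' j • x j else 0 := by
          intro j _
          by_cases h : j ∈ t
          · simp [h, hgσ1 j h]
          · simp [h]
        rw [Finset.sum_congr rfl hstep, Finset.sum_ite_mem, Finset.univ_inter, hteq, hps]
      · -- second sum equals τ • a0
        have hstep : ∀ j ∈ (Finset.univ : Finset (Fin d)),
            (if j = j0 then τ else 0) • g j (σ1 j)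
              = if j = j0 then τ • g j (σ1 j) else 0 := by
          intro j _
          by_cases h : j = j0 <;> simp [h]
        rw [Finset.sum_congr rfl hstep, Finset.sum_ite_eq' Finset.univ j0
          (fun j => τ • g j (σ1 j))]
        simp only [Finset.mem_univ, if_true]
        exact (congrArg (fun z => τ • g j0 z) (Function.update_self j0 k0 σ0)).symm
  have hdist : ‖v - q‖ < ‖u‖ := by
    have hvq' : v - q = u - τ • a0 := by
      rw [hq_def, hu_def]; abel
    have h2 : ‖τ • a0‖ ^ 2 = τ ^ 2 * ‖a0‖ ^ 2 := by
      rw [norm_smul, mul_pow, Real.norm_eq_abs, sq_abs]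
    have h1 : τ * ‖a0‖ ^ 2 = ⟪u, a0⟫ := by
      rw [hτ_def]
      exact div_mul_cancel₀ _ (pow_ne_zero 2 (norm_ne_zero_iff.mpr ha0))
    have hsq : ‖u - τ • a0‖ ^ 2 < ‖u‖ ^ 2 := by
      rw [norm_sub_sq_real, real_inner_smul_right, h2]
      nlinarith [hua, hτ]
    rw [hvq']
    exact lt_of_pow_lt_pow_left₀ 2 (norm_nonneg _) hsq
  have hbdd : BddBelow (Set.range fun w : K σ1 => ‖v - w‖) := by
    refine ⟨0, ?_⟩
    rintro y ⟨w, rfl⟩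
    exact norm_nonneg _
  have h1 : D σ1 ≤ ‖v - q‖ := ciInf_le hbdd (⟨q, hq⟩ : K σ1)
  have h2 : D σ0 ≤ D σ1 := hmin σ1 (Finset.mem_univ _)
  have h3 : D σ0 = ‖u‖ := by
    rw [hD, hu_def]
    exact hpd.symm
  exfalso
  linarith

lemma span_eq_top_of_posHull {d : ℕ} {A : Set (EuclideanSpace ℝ (Fin d))}
    (h : posHull A = Set.univ) : Submodule.span ℝ A = ⊤ := by
  rw [eq_top_iff]
  intro w _
  have hw : w ∈ posHull A := by rw [h]; trivial
  obtain ⟨n, c, f, _, hf, rfl⟩ := hw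
  exact Submodule.sum_mem _ fun i _ =>
    Submodule.smul_mem _ _ (Submodule.subset_span (hf i))

lemma exists_indep_partial {d : ℕ} (Y : Fin d → Set (EuclideanSpace ℝ (Fin d)))
    (hY : ∀ i, Submodule.span ℝ (Y i) = ⊤) :
    ∀ k (hk : k ≤ d), ∃ b : Fin k → EuclideanSpace ℝ (Fin d),
      (∀ i, b i ∈ Y (Fin.castLE hk i)) ∧ LinearIndependent ℝ b := by
  intro k
  induction k with
  | zero =>
    intro hk
    exact ⟨Fin.elim0, fun i => i.elim0, linearIndependent_empty_type⟩
  | succ k ih =>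
    intro hk
    obtain ⟨b, hbmem, hbind⟩ := ih (by omega)
    have hspan : Submodule.span ℝ (Set.range b) ≠ ⊤ := by
      intro h
      have h1 : Module.finrank ℝ (Submodule.span ℝ (Set.range b)) ≤ k := by
        simpa [Set.finrank] using finrank_range_le_card b
      rw [h, finrank_top, finrank_euclideanSpace_fin] at h1
      omega
    obtain ⟨z, hz_mem, hz⟩ : ∃ z ∈ Y (Fin.castLE hk (Fin.last k)),
        z ∉ Submodule.span ℝ (Set.range b) := by
      by_contra hcon
      push_neg at hcon
      apply hspan
      rw [← top_le_iff, ← hY (Fin.castLE hk (Fin.last k))]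
      exact Submodule.span_le.mpr fun w hw => hcon w hw
    refine ⟨Fin.snoc b z, ?_, linearIndependent_fin_snoc.mpr ⟨hbind, hz⟩⟩
    intro i
    refine Fin.lastCases ?_ ?_ i
    · rw [Fin.snoc_last]; exact hz_mem
    · intro j
      rw [Fin.snoc_castSucc]
      exact hbmem j

lemma exists_indep_transversal {d : ℕ} (hd : 0 < d)
    (Y : Fin d → Set (EuclideanSpace ℝ (Fin d)))
    (hY : ∀ i, Submodule.span ℝ (Y i) = ⊤) :
    ∃ b : Fin d → EuclideanSpace ℝ (Fin d),
      (∀ i, b i ∈ Y i) ∧ LinearIndependent ℝ b := by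
  obtain ⟨b, hbmem, hbind⟩ := exists_indep_partial Y hY d (le_refl d)
  exact ⟨b, fun i => by simpa using hbmem i, hbind⟩

end ColourfulSteinitzAux

theorem colourful_steinitz (d : ℕ) (X : Fin (2 * d) → Set (EuclideanSpace ℝ (Fin d)))
    (hX : ∀ i, posHull (X i) = Set.univ) :
    ∃ x : Fin (2 * d) → EuclideanSpace ℝ (Fin d),
      (∀ i, x i ∈ X i) ∧ posHull (Set.range x) = Set.univ := by
  classical
  rcases Nat.eq_zero_or_pos d with hd | hd
  · -- trivial case d = 0
    subst hd
    refine ⟨fun i => absurd i.isLt (by omega), fun i => absurd i.isLt (by omega), ?_⟩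
    apply Set.eq_univ_of_forall
    intro w
    refine ⟨0, Fin.elim0, Fin.elim0, fun i => i.elim0, fun i => i.elim0, ?_⟩
    have hw0 : w = 0 := by ext i; exact i.elim0
    rw [hw0, Finset.univ_eq_empty, Finset.sum_empty]
  · -- main case d > 0
    haveI : Nonempty (Fin d) := ⟨⟨0, hd⟩⟩
    obtain ⟨b, hbmem, hbind⟩ :=
      ColourfulSteinitzAux.exists_indep_transversal hd
        (fun k : Fin d => X ⟨(k : ℕ), by have := k.2; omega⟩)
        (fun k => ColourfulSteinitzAux.span_eq_top_of_posHull (hX _))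
    set v : EuclideanSpace ℝ (Fin d) := -∑ k, b k with hv_def
    have hv : v ≠ 0 := by
      rw [hv_def, neg_ne_zero]
      intro h
      have := Fintype.linearIndependent_iff.mp hbind (fun _ => 1) (by simpa using h) ⟨0, hd⟩
      norm_num at this
    have hvk : ∀ k : Fin d,
        v ∈ posHull (X ⟨d + (k : ℕ), by have := k.2; omega⟩) := fun k => by
      rw [hX]; trivial
    simp only [posHull, Set.mem_setOf_eq] at hvk
    choose nn cf ff hcf hff hrep using hvk
    obtain ⟨σ, a, ha, hva⟩ := ColourfulSteinitzAux.barany hv nn ff cf hcf hrep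
    set y : Fin d → EuclideanSpace ℝ (Fin d) := fun k => ff k (σ k) with hy
    set x : Fin (2 * d) → EuclideanSpace ℝ (Fin d) := fun i =>
      if h : (i : ℕ) < d then b ⟨(i : ℕ), h⟩
      else y ⟨(i : ℕ) - d, by have := i.2; omega⟩ with hxdef
    have hxlt : ∀ (i : Fin (2 * d)) (h : (i : ℕ) < d), x i = b ⟨(i : ℕ), h⟩ := by
      intro i h
      rw [hxdef]; exact dif_pos h
    have hxge : ∀ (i : Fin (2 * d)) (h : ¬ (i : ℕ) < d),
        x i = y ⟨(i : ℕ) - d, by have := i.2; omega⟩ := by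
      intro i h
      rw [hxdef]; exact dif_neg h
    refine ⟨x, ?_, ?_⟩
    · intro i
      by_cases h : (i : ℕ) < d
      · rw [hxlt i h]
        have hXeq : X i = X ⟨(i : ℕ), by have := i.2; omega⟩ :=
          congrArg X (Fin.ext rfl)
        rw [hXeq]
        exact hbmem ⟨(i : ℕ), h⟩
      · rw [hxge i h]
        have hXeq : X i = X ⟨d + ((i : ℕ) - d), by have := i.2; omega⟩ :=
          congrArg X (Fin.ext (show (i : ℕ) = d + ((i : ℕ) - d) by omega))
        rw [hXeq]
        simp only [hy]
        exact hff ⟨(i : ℕ) - d, by have := i.2; omega⟩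
          (σ ⟨(i : ℕ) - d, by have := i.2; omega⟩)
    · apply Set.eq_univ_of_forall
      intro w
      set B := basisOfLinearIndependentOfCardEqFinrank hbind
        (by rw [Fintype.card_fin, finrank_euclideanSpace_fin]) with hB
      have hBk : ∀ k, B k = b k := fun k => by
        rw [hB, coe_basisOfLinearIndependentOfCardEqFinrank]
      set t : Fin d → ℝ := fun k => B.repr w k with ht
      have hw : ∑ k, t k • b k = w := by
        have h0 := B.sum_repr w
        simp only [hBk] at h0
        exact h0
      set M := ∑ k, |t k| with hM
      have hM0 : 0 ≤ M := Finset.sum_nonneg fun k _ => abs_nonneg _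
      have hMk : ∀ k, 0 ≤ t k + M := by
        intro k
        have h1 : |t k| ≤ M :=
          Finset.single_le_sum (fun k _ => abs_nonneg (t k)) (Finset.mem_univ k)
        have h2 := neg_abs_le (t k)
        linarith
      refine ⟨d + d, Fin.append (fun k => t k + M) (fun k => M * a k), Fin.append b y,
        ?_, ?_, ?_⟩
      · intro i
        refine Fin.addCases ?_ ?_ i
        · intro k; rw [Fin.append_left]; exact hMk k
        · intro k; rw [Fin.append_right]; exact mul_nonneg hM0 (ha k)
      · intro i
        refine Fin.addCases ?_ ?_ i
        · intro k
          rw [Fin.append_left]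
          refine ⟨⟨(k : ℕ), by have := k.2; omega⟩, ?_⟩
          exact (hxlt ⟨(k : ℕ), by have := k.2; omega⟩ k.2).trans
            (congrArg b (Fin.ext rfl))
        · intro k
          rw [Fin.append_right]
          refine ⟨⟨d + (k : ℕ), by have := k.2; omega⟩, ?_⟩
          exact (hxge ⟨d + (k : ℕ), by have := k.2; omega⟩ (by simp)).trans
            (congrArg y (Fin.ext (by simp)))
      · rw [Fin.sum_univ_add]
        simp only [Fin.append_left, Fin.append_right]
        have h1 : ∑ k, (t k + M) • b k = w + M • ∑ k, b k := by
          rw [Finset.sum_congr rfl (fun k _ => add_smul (t k) M (b k)),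
            Finset.sum_add_distrib, hw]
          congr 1
          rw [Finset.smul_sum]
        have h2 : ∑ k, (M * a k) • y k = M • v := by
          rw [hva, Finset.smul_sum]
          refine Finset.sum_congr rfl (fun k _ => ?_)
          simp only [hy]
          exact mul_smul M (a k) (ff k (σ k))
        rw [h1, h2, hv_def, smul_neg]
        abel
end

section
/- Every positive basis of ℝ^d has at most 2d elements. -/
open scoped BigOperators

/-- `B` is a positive basis of the set `L` (typically a linear subspace). -/
def IsPosBasisOf {d : ℕ} (B L : Set (EuclideanSpace ℝ (Fin d))) : Prop :=
  posHull B = L ∧ ∀ b ∈ B, posHull (B \ {b}) ≠ L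

open Submodule Module

local notation "Rge0" => {c : ℝ // 0 ≤ c}

section Generic

variable {E : Type} [AddCommGroup E] [Module ℝ E]

/-- Anything in the real span of `s` is in the nonnegative span of `s ∪ -s`. -/
lemma mem_nonnegSpan_union_neg {s : Set E} {x : E} (hx : x ∈ span ℝ s) :
    x ∈ span Rge0 (s ∪ -s) := by
  have : x ∈ span Rge0 (s ∪ -s) ∧ -x ∈ span Rge0 (s ∪ -s) := by
    induction hx using span_induction with
    | mem y hy =>
      constructor
      · exact subset_span (Or.inl hy)
      · exact subset_span (Or.inr (by simpa [Set.mem_neg] using hy))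
    | zero => simpa using ⟨zero_mem _, zero_mem _⟩
    | add y z hy hz hy' hz' =>
      exact ⟨add_mem hy'.1 hz'.1, by rw [neg_add]; exact add_mem hy'.2 hz'.2⟩
    | smul r y hy hy' =>
      rcases le_or_gt 0 r with h | h
      · refine ⟨?_, ?_⟩
        · have := smul_mem _ (⟨r, h⟩ : Rge0) hy'.1
          simpa [Nonneg.mk_smul] using this
        · have := smul_mem _ (⟨r, h⟩ : Rge0) hy'.2
          simpa [Nonneg.mk_smul, smul_neg] using this
      · have h' : (0:ℝ) ≤ -r := by linarith
        refine ⟨?_, ?_⟩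
        · have := smul_mem _ (⟨-r, h'⟩ : Rge0) hy'.2
          simpa [Nonneg.mk_smul, smul_neg, neg_smul] using this
        · have := smul_mem _ (⟨-r, h'⟩ : Rge0) hy'.1
          simpa [Nonneg.mk_smul, smul_neg, neg_smul] using this
  exact this.1

lemma finite_of_posSpanning [FiniteDimensional ℝ E] {A : Set E}
    (hA : ∀ x : E, x ∈ span Rge0 A)
    (hind : ∀ a ∈ A, a ∉ span Rge0 (A \ {a})) : A.Finite := by
  classical
  -- a finite real-spanning set
  obtain ⟨S, hS⟩ : (⊤ : Submodule ℝ E).FG := Module.Finite.fg_top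
  choose c hsupp hsum using fun v : E => mem_span_set.1 (hA v)
  set G : Finset E := S ∪ S.image Neg.neg with hG
  set F : Finset E := G.biUnion (fun v => (c v).support) with hF
  have hFA : (F : Set E) ⊆ A := by
    intro x hx
    simp only [hF, Finset.coe_biUnion, Set.mem_iUnion, Finset.mem_coe] at hx
    obtain ⟨v, _, hv⟩ := hx
    exact hsupp v hv
  have hGF : ∀ v ∈ (G : Set E), v ∈ span Rge0 (F : Set E) := by
    intro v hv
    rw [← hsum v]
    rw [Finsupp.sum]
    refine sum_mem fun a ha => smul_mem _ _ (subset_span ?_)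
    simp only [hF, Finset.coe_biUnion, Set.mem_iUnion, Finset.mem_coe]
    exact ⟨v, hv, ha⟩
  have hFspan : ∀ x : E, x ∈ span Rge0 (F : Set E) := by
    intro x
    have hx : x ∈ span ℝ (S : Set E) := by rw [hS]; trivial
    have h1 : x ∈ span Rge0 ((S : Set E) ∪ -(S : Set E)) := mem_nonnegSpan_union_neg hx
    have h2 : span Rge0 ((S : Set E) ∪ -(S : Set E)) ≤ span Rge0 (F : Set E) := by
      rw [span_le]
      intro v hv
      refine hGF v ?_
      rcases hv with hv | hv
      · simp [hG, hv]
      · rw [Set.mem_neg] at hv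
        simp only [hG, Finset.coe_union, Finset.coe_image, Set.mem_union]
        exact Or.inr ⟨-v, hv, neg_neg v⟩
    exact h2 h1
  have hAF : A ⊆ (F : Set E) := by
    intro a ha
    by_contra haF
    refine hind a ha ?_
    have : (F : Set E) ⊆ A \ {a} := fun x hx => ⟨hFA hx, fun h => haF (h ▸ hx)⟩
    exact span_mono this (hFspan a)
  exact Set.Finite.subset (F.finite_toSet) hAF

/-- If a positive circuit `T` admits an extra dependence `mu` vanishing at `t ∈ T` and positive
somewhere on `T`, then there is a strictly smaller positive circuit. -/
lemma smaller_circuit (T : Finset E) (lam : E → ℝ) (hpos : ∀ s ∈ T, 0 < lam s)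
    (hsum : ∑ s ∈ T, lam s • s = 0) (mu : E → ℝ) (hmusum : ∑ s ∈ T, mu s • s = 0)
    (t : E) (ht : t ∈ T) (hmut : mu t = 0) (hposmu : ∃ s ∈ T, 0 < mu s) :
    ∃ T' : Finset E, T' ⊆ T ∧ T'.card < T.card ∧ T'.Nonempty ∧
      ∃ lam' : E → ℝ, (∀ s ∈ T', 0 < lam' s) ∧ ∑ s ∈ T', lam' s • s = 0 := by
  classical
  set P : Finset E := T.filter (fun s => 0 < mu s) with hP
  have hPne : P.Nonempty := by
    obtain ⟨s, hs, hs'⟩ := hposmu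
    exact ⟨s, by simp [hP, hs, hs']⟩
  obtain ⟨sm, hsmP, hsm⟩ := P.exists_min_image (fun s => lam s / mu s) hPne
  have hsmT : sm ∈ T := (Finset.mem_filter.1 hsmP).1
  have hmusm : 0 < mu sm := (Finset.mem_filter.1 hsmP).2
  set ε : ℝ := lam sm / mu sm with hε
  have hε0 : 0 < ε := div_pos (hpos sm hsmT) hmusm
  set ν : E → ℝ := fun s => lam s - ε * mu s with hν
  have hν0 : ∀ s ∈ T, 0 ≤ ν s := by
    intro s hs
    rcases le_or_gt (mu s) 0 with h | h
    · have : ε * mu s ≤ 0 := mul_nonpos_of_nonneg_of_nonpos hε0.le h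
      have := hpos s hs
      simp only [hν]; linarith
    · have hsP : s ∈ P := by simp [hP, hs, h]
      have : ε ≤ lam s / mu s := hsm s hsP
      have : ε * mu s ≤ lam s := by
        rw [← le_div_iff₀ h]; exact this
      simp only [hν]; linarith
  have hνsm : ν sm = 0 := by
    simp only [hν, hε]
    field_simp
    ring
  set T' : Finset E := T.filter (fun s => 0 < ν s) with hT'
  refine ⟨T', Finset.filter_subset _ _, ?_, ⟨t, ?_⟩, ν, fun s hs => (Finset.mem_filter.1 hs).2, ?_⟩
  · refine Finset.card_lt_card ⟨Finset.filter_subset _ _, fun hsub => ?_⟩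
    have := (Finset.mem_filter.1 (hsub hsmT)).2
    rw [hνsm] at this; exact lt_irrefl _ this
  · have : ν t = lam t := by simp [hν, hmut]
    simp only [hT', Finset.mem_filter]
    exact ⟨ht, by rw [this]; exact hpos t ht⟩
  · have : ∑ s ∈ T', ν s • s = ∑ s ∈ T, ν s • s := by
      refine Finset.sum_filter_of_ne fun s hs hne => ?_
      rcases (hν0 s hs).lt_or_eq with h | h
      · exact h
      · exact absurd (by rw [← h, zero_smul]) hne
    rw [this]
    have : ∑ s ∈ T, ν s • s = (∑ s ∈ T, lam s • s) - ε • ∑ s ∈ T, mu s • s := by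
      rw [Finset.smul_sum, ← Finset.sum_sub_distrib]
      refine Finset.sum_congr rfl fun s _ => ?_
      simp [hν, sub_smul, mul_smul]
    rw [this, hsum, hmusum, smul_zero, sub_zero]

end Generic

lemma main_bound (n : ℕ) : ∀ (E : Type) [AddCommGroup E] [Module ℝ E]
    [FiniteDimensional ℝ E], finrank ℝ E ≤ n → ∀ A : Set E,
    (∀ x : E, x ∈ span Rge0 A) →
    (∀ a ∈ A, a ∉ span Rge0 (A \ {a})) → A.ncard ≤ 2 * finrank ℝ E := by
  induction n with
  | zero =>
    intro E _ _ _ hrank A hA hind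
    have h0 : finrank ℝ E = 0 := Nat.le_zero.1 hrank
    have hsub : Subsingleton E := (Module.finrank_zero_iff (R := ℝ)).1 h0
    have hAe : A = ∅ := by
      ext a
      simp only [Set.mem_empty_iff_false, iff_false]
      intro ha
      exact hind a ha (by rw [Subsingleton.elim a 0]; exact zero_mem _)
    simp [hAe]
  | succ n ih =>
    intro E _ _ _ hrank A hA hind
    classical
    rcases Set.eq_empty_or_nonempty A with rfl | ⟨a₀, ha₀⟩
    · simp
    have hAfin : A.Finite := finite_of_posSpanning hA hind
    have h0A : (0 : E) ∉ A := fun h => hind 0 h (zero_mem _)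
    -- the set of positive circuits
    set C : Set (Finset E) := {T | ↑T ⊆ A ∧ T.Nonempty ∧
        ∃ lam : E → ℝ, (∀ s ∈ T, 0 < lam s) ∧ ∑ s ∈ T, lam s • s = 0} with hC
    have hCne : C.Nonempty := by
      obtain ⟨c, hcsupp, hcsum⟩ := mem_span_set.1 (hA (-a₀))
      refine ⟨insert a₀ c.support, ?_, ⟨a₀, Finset.mem_insert_self _ _⟩,
        fun s => (if s = a₀ then (1:ℝ) else 0) + (c s : ℝ), ?_, ?_⟩
      · intro s hs
        rcases Finset.mem_insert.1 (Finset.mem_coe.1 hs) with rfl | hs'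
        · exact ha₀
        · exact hcsupp hs'
      · intro s hs
        by_cases hsa : s = a₀
        · have h2 := (c s).2
          simp only [if_pos hsa]
          linarith
        · have hs' : s ∈ c.support := by
            rcases Finset.mem_insert.1 hs with h | h
            · exact absurd h hsa
            · exact h
          have hne : c s ≠ 0 := Finsupp.mem_support_iff.1 hs'
          rcases (c s).2.lt_or_eq with h | h
          · simp only [if_neg hsa]; linarith
          · exact absurd (Subtype.ext h.symm) hne
      · have hsum1 : ∑ s ∈ insert a₀ c.support, (if s = a₀ then (1:ℝ) else 0) • s = a₀ := by
          simp only [ite_smul, one_smul, zero_smul]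
          rw [Finset.sum_ite_eq' (insert a₀ c.support) a₀ (fun s => s)]
          simp
        have hsum2 : ∑ s ∈ insert a₀ c.support, (c s : ℝ) • s = -a₀ := by
          rw [Finset.sum_insert_of_eq_zero_if_notMem
            (fun h => by rw [Finsupp.notMem_support_iff.1 h]; simp)]
          rw [← hcsum, Finsupp.sum]
          rfl
        simp only [add_smul, Finset.sum_add_distrib, hsum1, hsum2, add_neg_cancel]
    -- choose a minimal circuit
    obtain ⟨T, hTC, hTcard⟩ := Nat.sInf_mem (hCne.image Finset.card)
    have hTmin : ∀ T' ∈ C, T.card ≤ T'.card := fun T' hT' =>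
      hTcard ▸ Nat.sInf_le ⟨T', hT', rfl⟩
    obtain ⟨hTA, hTne, lam, hlam, hlamsum⟩ := hTC
    obtain ⟨t, ht⟩ := hTne
    have hT2 : 2 ≤ T.card := by
      by_contra h
      have h1 : T.card = 1 := by
        have := Finset.card_pos.2 ⟨t, ht⟩
        omega
      obtain ⟨s, rfl⟩ := Finset.card_eq_one.1 h1
      rw [Finset.sum_singleton] at hlamsum
      have hs0 : s = 0 := by
        rcases smul_eq_zero.1 hlamsum with h | h
        · exact absurd h (ne_of_gt (hlam s (Finset.mem_singleton_self s)))
        · exact h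
      exact h0A (hs0 ▸ hTA (Finset.mem_coe.2 (Finset.mem_singleton_self s)))
    -- minimality kills extra dependencies
    have key : ∀ mu : E → ℝ, (∑ s ∈ T, mu s • s = 0) → mu t = 0 →
        (∃ s ∈ T, 0 < mu s) → False := by
      intro mu hmusum hmut hposmu
      obtain ⟨T', hT'sub, hT'lt, hT'ne, lam', h1, h2⟩ :=
        smaller_circuit T lam hlam hlamsum mu hmusum t ht hmut hposmu
      have : T.card ≤ T'.card :=
        hTmin T' ⟨(Finset.coe_subset.2 hT'sub).trans hTA, hT'ne, lam', h1, h2⟩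
      omega
    -- T.erase t is linearly independent
    have hli : LinearIndependent ℝ ((↑) : (T.erase t) → E) := by
      by_contra hdep
      rw [Fintype.not_linearIndependent_iff] at hdep
      obtain ⟨g, hgsum, i₀, hgi₀⟩ := hdep
      set mu : E → ℝ := fun x => if h : x ∈ T.erase t then g ⟨x, h⟩ else 0 with hmu
      rw [Finset.univ_eq_attach] at hgsum
      have hmusumerase : ∑ s ∈ T.erase t, mu s • s = 0 := by
        rw [← Finset.sum_attach (T.erase t) (fun s => mu s • s), ← hgsum]
        refine Finset.sum_congr rfl fun i _ => ?_
        simp only [hmu]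
        rw [dif_pos i.2, Subtype.coe_eta]
      have hmusum : ∑ s ∈ T, mu s • s = 0 := by
        rw [← Finset.sum_subset (Finset.erase_subset t T)
          (fun x _ hx' => by simp only [hmu]; rw [dif_neg hx', zero_smul])]
        exact hmusumerase
      have hmut : mu t = 0 := dif_neg (Finset.notMem_erase t T)
      have hmui₀ : mu ↑i₀ = g i₀ := by
        simp only [hmu]
        rw [dif_pos i₀.2, Subtype.coe_eta]
      have hi₀T : (i₀ : E) ∈ T := Finset.erase_subset t T i₀.2
      rcases lt_or_gt_of_ne hgi₀ with hneg | hpos2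
      · refine key (-mu) ?_ (by simp [hmut]) ⟨↑i₀, hi₀T, by simp [hmui₀]; linarith⟩
        simp only [Pi.neg_apply, neg_smul, Finset.sum_neg_distrib, hmusum, neg_zero]
      · exact key mu hmusum hmut ⟨↑i₀, hi₀T, by rw [hmui₀]; exact hpos2⟩
    -- rank of the span of T
    set W : Submodule ℝ E := span ℝ (T : Set E) with hW
    have hWrank : T.card - 1 ≤ finrank ℝ W := by
      have hsp : finrank ℝ (span ℝ ((T.erase t : Finset E) : Set E)) = T.card - 1 := by
        rw [finrank_span_finset_eq_card hli, Finset.card_erase_of_mem ht]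
      have hmono : span ℝ ((T.erase t : Finset E) : Set E) ≤ W :=
        span_mono (by exact_mod_cast Finset.erase_subset t T)
      rw [← hsp]
      exact Submodule.finrank_mono hmono
    -- W ⊆ nonneg span of T
    have hnegT : ∀ s ∈ (T : Set E), -s ∈ span Rge0 (T : Set E) := by
      intro s hs
      rw [Finset.mem_coe] at hs
      have hrel : ∑ u ∈ T.erase s, lam u • u = -(lam s • s) := by
        rw [Finset.sum_erase_eq_sub hs, hlamsum, zero_sub]
      have hmemS : ∑ u ∈ T.erase s, lam u • u ∈ span Rge0 (T : Set E) := by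
        refine sum_mem fun u hu => ?_
        have hu' : u ∈ T := Finset.erase_subset s T hu
        have : (⟨lam u, (hlam u hu').le⟩ : Rge0) • u ∈ span Rge0 (T : Set E) :=
          smul_mem _ _ (subset_span (Finset.mem_coe.2 hu'))
        simpa [Nonneg.mk_smul] using this
      have hsinv : (0:ℝ) ≤ (lam s)⁻¹ := inv_nonneg.2 (hlam s hs).le
      have hmem2 : (⟨(lam s)⁻¹, hsinv⟩ : Rge0) • (∑ u ∈ T.erase s, lam u • u)
          ∈ span Rge0 (T : Set E) := smul_mem _ _ hmemS
      have heq : (⟨(lam s)⁻¹, hsinv⟩ : Rge0) • (∑ u ∈ T.erase s, lam u • u) = -s := by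
        rw [Nonneg.mk_smul, hrel, smul_neg, smul_smul,
          inv_mul_cancel₀ (ne_of_gt (hlam s hs)), one_smul]
      rwa [heq] at hmem2
    have hWset : ∀ x ∈ W, x ∈ span Rge0 (T : Set E) := by
      intro x hx
      have h1 := mem_nonnegSpan_union_neg hx
      have h2 : span Rge0 ((T : Set E) ∪ -(T : Set E)) ≤ span Rge0 (T : Set E) := by
        rw [span_le]
        rintro v (hv | hv)
        · exact subset_span hv
        · rw [Set.mem_neg] at hv
          simpa using hnegT (-v) hv
      exact h2 h1
    -- pass to the quotient
    set Q := E ⧸ W with hQdef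
    set π := W.mkQ with hπ
    have hπT : ∀ s ∈ (T : Set E), π s = 0 := fun s hs =>
      (Submodule.Quotient.mk_eq_zero W).2 (subset_span hs)
    have himg : ∀ s : Set E, span Rge0 (π '' s)
        = Submodule.map (π.restrictScalars Rge0) (span Rge0 s) := by
      intro s
      rw [← Submodule.span_image]
      rfl
    set A' : Set Q := π '' (A \ ↑T) with hA'def
    have hA'span : ∀ x : Q, x ∈ span Rge0 A' := by
      intro xq
      obtain ⟨x, rfl⟩ := W.mkQ_surjective xq
      have h1 : W.mkQ x ∈ span Rge0 (π '' A) := by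
        rw [himg]
        exact ⟨x, hA x, rfl⟩
      refine span_le.2 ?_ h1
      rintro _ ⟨a, ha, rfl⟩
      by_cases haT : a ∈ (T : Set E)
      · rw [hπT a haT]; exact zero_mem _
      · exact subset_span ⟨a, ⟨ha, haT⟩, rfl⟩
    have hinj : Set.InjOn π (A \ ↑T) := by
      intro a ha b hb hab
      by_contra hne
      apply hind a ha.1
      have h1 : a - b ∈ W := by
        have : π (a - b) = 0 := by rw [map_sub, hab, sub_self]
        exact (Submodule.Quotient.mk_eq_zero W).1 this
      have h3 : span Rge0 (T : Set E) ≤ span Rge0 (A \ {a}) :=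
        span_mono fun u hu => ⟨hTA hu, fun he => ha.2 (he ▸ hu)⟩
      have h4 : b ∈ span Rge0 (A \ {a}) :=
        subset_span ⟨hb.1, fun h => hne (Set.mem_singleton_iff.1 h).symm⟩
      have h5 := add_mem h4 (h3 (hWset _ h1))
      simpa using h5
    have hind' : ∀ aq ∈ A', aq ∉ span Rge0 (A' \ {aq}) := by
      rintro _ ⟨a, haAT, rfl⟩ hmem
      apply hind a haAT.1
      have hsub : A' \ {π a} ⊆ π '' ((A \ ↑T) \ {a}) := by
        rintro _ ⟨⟨b, hb, rfl⟩, hne⟩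
        exact ⟨b, ⟨hb, fun h => hne (by rw [Set.mem_singleton_iff, h])⟩, rfl⟩
      have h1 : π a ∈ span Rge0 (π '' ((A \ ↑T) \ {a})) := span_mono hsub hmem
      rw [himg] at h1
      obtain ⟨y, hy, hyeq⟩ := h1
      have h2 : a - y ∈ W := by
        have : π (a - y) = 0 := by
          rw [map_sub]
          have : π y = π a := hyeq
          rw [this, sub_self]
        exact (Submodule.Quotient.mk_eq_zero W).1 this
      have h3 : y ∈ span Rge0 (A \ {a}) :=
        span_mono (Set.diff_subset_diff_left Set.diff_subset) hy
      have h4 : a - y ∈ span Rge0 (A \ {a}) := by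
        refine span_mono ?_ (hWset _ h2)
        intro u hu
        exact ⟨hTA hu, fun he => haAT.2 (he ▸ hu)⟩
      have h5 := add_mem h3 h4
      simpa using h5
    -- apply the induction hypothesis
    have hq : finrank ℝ Q + finrank ℝ W = finrank ℝ E :=
      Submodule.finrank_quotient_add_finrank W
    have hQn : finrank ℝ Q ≤ n := by omega
    have hbound := ih Q hQn A' hA'span hind'
    -- count
    have hcard1 : A'.ncard = (A \ ↑T).ncard :=
      Set.ncard_image_of_injOn hinj
    have hcard2 : (A \ ↑T).ncard + (↑T : Set E).ncard = A.ncard :=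
      Set.ncard_diff_add_ncard_of_subset (by exact_mod_cast hTA) hAfin
    have hcard3 : (↑T : Set E).ncard = T.card := Set.ncard_coe_finset T
    omega

lemma posHull_eq_span {d : ℕ} (A : Set (EuclideanSpace ℝ (Fin d))) :
    posHull A = (span Rge0 A : Set (EuclideanSpace ℝ (Fin d))) := by
  ext x
  simp only [posHull, Set.mem_setOf_eq, SetLike.mem_coe, mem_span_set']
  constructor
  · rintro ⟨n, c, f, hc, hf, rfl⟩
    exact ⟨n, fun i => ⟨c i, hc i⟩, fun i => ⟨f i, hf i⟩, by simp [Nonneg.mk_smul]⟩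
  · rintro ⟨n, f, g, h⟩
    exact ⟨n, fun i => (f i : ℝ), fun i => g i, fun i => (f i).2, fun i => (g i).2,
      by rw [← h]; rfl⟩


theorem posBasis_card_le (d : ℕ) (A : Set (EuclideanSpace ℝ (Fin d)))
    (hA : IsPosBasisOf A Set.univ) :
    A.Finite ∧ A.ncard ≤ 2 * d := by
  obtain ⟨hspan, hmin⟩ := hA
  rw [posHull_eq_span] at hspan
  have hAmem : ∀ x : EuclideanSpace ℝ (Fin d), x ∈ span Rge0 A := by
    intro x
    have : x ∈ (span Rge0 A : Set (EuclideanSpace ℝ (Fin d))) := hspan ▸ Set.mem_univ x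
    exact this
  have hind : ∀ a ∈ A, a ∉ span Rge0 (A \ {a}) := by
    intro a ha hmem
    apply hmin a ha
    rw [posHull_eq_span]
    have hle : span Rge0 (A \ {a}) = span Rge0 A := by
      refine le_antisymm (span_mono Set.diff_subset) (span_le.2 fun b hb => ?_)
      by_cases hba : b = a
      · exact hba ▸ hmem
      · exact subset_span ⟨hb, hba⟩
    rw [hle, hspan]
  refine ⟨finite_of_posSpanning hAmem hind, ?_⟩
  have := main_bound d (EuclideanSpace ℝ (Fin d)) (le_of_eq finrank_euclideanSpace_fin)
    A hAmem hind
  rwa [finrank_euclideanSpace_fin] at this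
end

section
/- Let e₁, …, e_d be a basis of ℝ^d, let X = {±e₁, …, ±e_d}, and set X_i = X for all i ∈ {1, …, 2d}. Then pos X_i = ℝ^d for each i, yet for every proper subset I ⊊ {1,…,2d} and every choice of points x_i ∈ X_i (i ∈ I), pos {x_i : i ∈ I} ≠ ℝ^d. -/
open scoped BigOperators

lemma posHull_nonpos {d : ℕ} (φ : EuclideanSpace ℝ (Fin d) →ₗ[ℝ] ℝ)
    {A : Set (EuclideanSpace ℝ (Fin d))} (hA : ∀ v ∈ A, φ v ≤ 0)
    {x : EuclideanSpace ℝ (Fin d)} (hx : x ∈ posHull A) : φ x ≤ 0 := by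
  obtain ⟨n, c, f, hc, hf, rfl⟩ := hx
  rw [map_sum]
  apply Finset.sum_nonpos
  intro i _
  rw [map_smul]
  exact smul_nonpos_of_nonneg_of_nonpos (hc i) (hA _ (hf i))

theorem bcase_sharp (d : ℕ) (e : Fin d → EuclideanSpace ℝ (Fin d))
    (he : LinearIndependent ℝ e) (hspan : Submodule.span ℝ (Set.range e) = ⊤)
    (X : Fin (2 * d) → Set (EuclideanSpace ℝ (Fin d)))
    (hXdef : ∀ i, X i = Set.range e ∪ (-(Set.range e))) :
    (∀ i, posHull (X i) = Set.univ) ∧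
    ∀ I : Finset (Fin (2 * d)), I ≠ Finset.univ →
      ∀ x : Fin (2 * d) → EuclideanSpace ℝ (Fin d),
        (∀ i ∈ I, x i ∈ X i) → posHull (x '' ↑I) ≠ Set.univ := by
  classical
  set b : Module.Basis (Fin d) ℝ (EuclideanSpace ℝ (Fin d)) := Module.Basis.mk he hspan.ge with hb
  have hbe : ∀ i, b i = e i := fun i => Module.Basis.mk_apply he hspan.ge i
  constructor
  · -- positive hull of X i is everything
    intro i
    apply Set.eq_univ_of_forall
    intro v
    refine ⟨d + d, Fin.append (fun i => max (b.repr v i) 0) (fun i => max (-(b.repr v i)) 0),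
      Fin.append e (fun i => -(e i)), ?_, ?_, ?_⟩
    · intro j
      refine Fin.addCases (fun k => ?_) (fun k => ?_) j
      · simp only [Fin.append_left]; exact le_max_right _ _
      · simp only [Fin.append_right]; exact le_max_right _ _
    · intro j
      rw [hXdef]
      refine Fin.addCases (fun k => ?_) (fun k => ?_) j
      · simp only [Fin.append_left]; exact Or.inl ⟨k, rfl⟩
      · simp only [Fin.append_right]
        exact Or.inr (by rw [Set.mem_neg, neg_neg]; exact ⟨k, rfl⟩)
    · rw [Fin.sum_univ_add]
      simp only [Fin.append_left, Fin.append_right]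
      have hv : v = ∑ i : Fin d, b.repr v i • e i := by
        conv_lhs => rw [← b.sum_repr v]
        simp [hbe]
      rw [← Finset.sum_add_distrib]
      conv_lhs => rw [hv]
      apply Finset.sum_congr rfl
      intro i _
      rw [smul_neg, ← sub_eq_add_neg, ← sub_smul]
      congr 1
      rcases le_total 0 (b.repr v i) with h | h
      · rw [max_eq_left h, max_eq_right (by linarith), sub_zero]
      · rw [max_eq_right h, max_eq_left (by linarith), zero_sub, neg_neg]
  · intro I hI x hx hcontra
    have hcard : I.card < 2 * d := by
      have := Finset.card_lt_card (Finset.ssubset_univ_iff.mpr hI)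
      simpa using this
    have hXset : Set.range e ∪ (-(Set.range e)) = Set.range e ∪ (Neg.neg '' Set.range e) := by
      rw [Set.image_neg_eq_neg]
    have hne : ∀ i j : Fin d, e i ≠ -(e j) := by
      intro i j h
      have h2 := congrArg (fun v => b.repr v i) h
      simp only [map_neg] at h2
      rw [show e i = b i from (hbe i).symm, show e j = b j from (hbe j).symm] at h2
      rw [b.repr_self, b.repr_self] at h2
      rcases eq_or_ne j i with rfl | hji
      · simp at h2; linarith
      · simp [Finsupp.single_apply, hji] at h2
    have hXcard : (Set.range e ∪ (-(Set.range e))).ncard = 2 * d := by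
      rw [hXset, Set.ncard_union_eq ?_ (Set.finite_range e)
        ((Set.finite_range e).image _)]
      · rw [Set.ncard_image_of_injective _ neg_injective, ← Set.image_univ,
          Set.ncard_image_of_injective _ he.injective, Set.ncard_univ,
          Nat.card_eq_fintype_card, Fintype.card_fin]
        ring
      · rw [Set.disjoint_left]
        rintro a ⟨i, rfl⟩ ⟨a', ⟨j, rfl⟩, h⟩
        exact hne i j (by rw [← h])
    have hmiss : ¬ (Set.range e ∪ (-(Set.range e)) ⊆ x '' ↑I) := by
      intro h
      have h1 : (Set.range e ∪ (-(Set.range e))).ncard ≤ (x '' ↑I).ncard :=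
        Set.ncard_le_ncard h (I.finite_toSet.image x)
      have h2 : (x '' ↑I).ncard ≤ I.card := by
        calc (x '' ↑I).ncard ≤ (↑I : Set (Fin (2 * d))).ncard := Set.ncard_image_le I.finite_toSet
          _ = I.card := by simp [Set.ncard_coe_finset]
      omega
    rw [Set.not_subset] at hmiss
    obtain ⟨v₀, hv₀X, hv₀⟩ := hmiss
    have hmemle : ∀ (φ : EuclideanSpace ℝ (Fin d) →ₗ[ℝ] ℝ),
        (∀ v ∈ x '' ↑I, φ v ≤ 0) → ∀ w, φ w ≤ 0 := by
      intro φ hφ w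
      have hw : w ∈ posHull (x '' ↑I) := hcontra ▸ Set.mem_univ w
      exact posHull_nonpos φ hφ hw
    rcases hv₀X with ⟨j, rfl⟩ | hv₀neg
    · -- missing element is e j : use the coordinate functional b.coord j
      have h1 : b.coord j (e j) ≤ 0 := by
        apply hmemle
        rintro v ⟨i, hi, rfl⟩
        have hvX := hx i hi; rw [hXdef] at hvX
        have hvne : x i ≠ e j := fun h => hv₀ ⟨i, hi, h⟩
        rcases hvX with ⟨k, hk⟩ | hneg
        · have hkj : k ≠ j := fun h => hvne (by rw [← hk, h])
          rw [← hk, Module.Basis.coord_apply, show e k = b k from (hbe k).symm, b.repr_self]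
          simp [Finsupp.single_apply, hkj]
        · rw [Set.mem_neg] at hneg
          obtain ⟨k, hk⟩ := hneg
          have hk' : x i = -(e k) := by rw [hk, neg_neg]
          rw [hk', Module.Basis.coord_apply, map_neg, show e k = b k from (hbe k).symm, b.repr_self]
          simp only [Finsupp.coe_neg, Pi.neg_apply, Finsupp.single_apply]
          split <;> norm_num
      rw [Module.Basis.coord_apply, show e j = b j from (hbe j).symm, b.repr_self] at h1
      norm_num at h1
    · -- missing element is -(e j)
      rw [Set.mem_neg] at hv₀neg
      obtain ⟨j, hj⟩ := hv₀neg
      have hv₀eq : v₀ = -(e j) := by rw [hj, neg_neg]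
      have h1 : (-(b.coord j)) v₀ ≤ 0 := by
        apply hmemle
        rintro v ⟨i, hi, rfl⟩
        have hvX := hx i hi; rw [hXdef] at hvX
        have hvne : x i ≠ -(e j) := fun h => hv₀ ⟨i, hi, by rw [h, ← hv₀eq]⟩
        rcases hvX with ⟨k, hk⟩ | hneg
        · rw [← hk, LinearMap.neg_apply, Module.Basis.coord_apply,
            show e k = b k from (hbe k).symm, b.repr_self]
          simp only [Finsupp.single_apply]
          split <;> norm_num
        · rw [Set.mem_neg] at hneg
          obtain ⟨k, hk⟩ := hneg
          have hk' : x i = -(e k) := by rw [hk, neg_neg]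
          have hkj : k ≠ j := fun h => hvne (by rw [hk', h])
          rw [hk', LinearMap.neg_apply, Module.Basis.coord_apply, map_neg,
            show e k = b k from (hbe k).symm, b.repr_self]
          simp [Finsupp.single_apply, hkj]
      rw [hv₀eq, LinearMap.neg_apply, Module.Basis.coord_apply, map_neg,
        show e j = b j from (hbe j).symm, b.repr_self] at h1
      norm_num at h1
end

section
/- Let F = {f₁, …, f_{d+1}} ⊆ ℝ^d be the vertex set of a simplex with the origin in its interior (so pos F = ℝ^d and F is affinely independent). Set X₁ = … = X_d = F and X_{d+1} = … = X_{2d} = −F. Then pos X_i = ℝ^d for every i, yet no choice of points x_i ∈ X_i over a proper subset I ⊊ {1,…,2d} satisfies pos {x_i : i ∈ I} = ℝ^d. -/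
open scoped BigOperators

lemma mem_posHull_self {d : ℕ} {A : Set (EuclideanSpace ℝ (Fin d))} {a : EuclideanSpace ℝ (Fin d)}
    (ha : a ∈ A) : a ∈ posHull A :=
  ⟨1, fun _ => 1, fun _ => a, fun _ => zero_le_one, fun _ => ha, by simp⟩

lemma posHull_smul {d : ℕ} {A : Set (EuclideanSpace ℝ (Fin d))} {x : EuclideanSpace ℝ (Fin d)}
    (hx : x ∈ posHull A) {r : ℝ} (hr : 0 ≤ r) : r • x ∈ posHull A := by
  obtain ⟨n, c, g, hc, hg, rfl⟩ := hx
  refine ⟨n, fun i => r * c i, g, fun i => mul_nonneg hr (hc i), hg, ?_⟩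
  rw [Finset.smul_sum]
  simp [smul_smul]

lemma posHull_convex_s10 {d : ℕ} (A : Set (EuclideanSpace ℝ (Fin d))) : Convex ℝ (posHull A) := by
  rintro x ⟨n, c, g, hc, hg, rfl⟩ y ⟨m, c', g', hc', hg', rfl⟩ p q hp hq _
  refine ⟨n + m, Fin.append (fun i => p * c i) (fun i => q * c' i), Fin.append g g',
    ?_, ?_, ?_⟩
  · intro i
    refine Fin.addCases (fun i => ?_) (fun i => ?_) i
    · simpa using mul_nonneg hp (hc i)
    · simpa using mul_nonneg hq (hc' i)
  · intro i
    refine Fin.addCases (fun i => ?_) (fun i => ?_) i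
    · simpa using hg i
    · simpa using hg' i
  · rw [Fin.sum_univ_add]
    simp only [Fin.append_left, Fin.append_right, mul_smul]
    rw [← Finset.smul_sum, ← Finset.smul_sum]

lemma posHull_eq_univ_of_zero_mem_interior {d : ℕ} {A : Set (EuclideanSpace ℝ (Fin d))}
    (h : (0 : EuclideanSpace ℝ (Fin d)) ∈ interior (convexHull ℝ A)) :
    posHull A = Set.univ := by
  have hsub : convexHull ℝ A ⊆ posHull A :=
    convexHull_min (fun a ha => mem_posHull_self ha) (posHull_convex_s10 A)
  obtain ⟨ε, hε, hball⟩ := Metric.mem_nhds_iff.mp (mem_interior_iff_mem_nhds.mp h)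
  ext x
  simp only [Set.mem_univ, iff_true]
  set r : ℝ := ε / (2 * (‖x‖ + 1)) with hr
  have h1 : (0 : ℝ) < ‖x‖ + 1 := by positivity
  have hr0 : 0 < r := by positivity
  have hmem : r • x ∈ Metric.ball (0 : EuclideanSpace ℝ (Fin d)) ε := by
    rw [Metric.mem_ball, dist_zero_right, norm_smul, Real.norm_of_nonneg hr0.le, hr,
      div_mul_eq_mul_div, div_lt_iff₀ (by positivity)]
    nlinarith [norm_nonneg x]
  have hx : r⁻¹ • (r • x) ∈ posHull A :=
    posHull_smul (hsub (hball hmem)) (inv_nonneg.mpr hr0.le)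
  rwa [smul_smul, inv_mul_cancel₀ hr0.ne', one_smul] at hx

lemma posHull_subset_halfspace {d : ℕ} {A : Set (EuclideanSpace ℝ (Fin d))}
    (φ : EuclideanSpace ℝ (Fin d) →ₗ[ℝ] ℝ) (hA : ∀ a ∈ A, φ a ≤ 0) :
    ∀ x ∈ posHull A, φ x ≤ 0 := by
  rintro x ⟨n, c, g, hc, hg, rfl⟩
  rw [map_sum]
  refine Finset.sum_nonpos fun i _ => ?_
  rw [map_smul, smul_eq_mul]
  have := mul_nonneg (hc i) (neg_nonneg.mpr (hA _ (hg i)))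
  linarith

lemma cone_ne_univ {d : ℕ} (f : Fin (d + 1) → EuclideanSpace ℝ (Fin d))
    (haff : AffineIndependent ℝ f)
    (hint : (0 : EuclideanSpace ℝ (Fin d)) ∈ interior (convexHull ℝ (Set.range f)))
    (a c : Fin (d + 1)) (hac : a ≠ c) (G : Set (EuclideanSpace ℝ (Fin d)))
    (hG : ∀ g ∈ G, (∃ j, j ≠ a ∧ g = f j) ∨ (∃ j, j ≠ c ∧ g = -f j)) :
    posHull G ≠ Set.univ := by
  classical
  have htop : affineSpan ℝ (Set.range f) = ⊤ := by
    rw [haff.affineSpan_eq_top_iff_card_eq_finrank_add_one]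
    simp [finrank_euclideanSpace_fin]
  let b : AffineBasis (Fin (d + 1)) ℝ (EuclideanSpace ℝ (Fin d)) := ⟨f, haff, htop⟩
  have hpos : ∀ j, 0 < b.coord j 0 := by
    have hint' := hint
    rw [show Set.range f = Set.range ⇑b from rfl, b.interior_convexHull] at hint'
    exact hint'
  set lam : Fin (d + 1) → ℝ := fun j => b.coord j 0 with hlam
  have hsum1 : ∑ j, lam j = 1 := b.sum_coord_apply_eq_one 0
  have hzero : ∑ j, lam j • f j = 0 := b.linear_combination_coord_eq_self 0
  have hli : LinearIndependent ℝ fun j : { x : Fin (d + 1) // x ≠ a } => f j - f a := by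
    have := (affineIndependent_iff_linearIndependent_vsub ℝ f a).mp haff
    simpa [vsub_eq_sub] using this
  have hcard : Fintype.card { x : Fin (d + 1) // x ≠ a } =
      Module.finrank ℝ (EuclideanSpace ℝ (Fin d)) := by
    simp [Fintype.card_subtype_compl, Fintype.card_subtype_eq, finrank_euclideanSpace_fin]
  haveI : Nonempty { x : Fin (d + 1) // x ≠ a } := ⟨⟨c, hac.symm⟩⟩
  let B := basisOfLinearIndependentOfCardEqFinrank hli hcard
  set t : Fin (d + 1) → ℝ := fun j => if j = a then lam c else if j = c then -lam a else 0 with ht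
  let φ : EuclideanSpace ℝ (Fin d) →ₗ[ℝ] ℝ := B.constr ℝ (fun j => t j.1 - t a)
  have hBc : ∀ j : { x : Fin (d + 1) // x ≠ a }, φ (f j - f a) = t j.1 - t a := by
    intro j
    have h1 : φ (B j) = t j.1 - t a := Module.Basis.constr_basis B ℝ _ j
    rwa [show B j = f j - f a from congrFun (coe_basisOfLinearIndependentOfCardEqFinrank hli hcard) j] at h1
  have key : ∀ j, φ (f j) = t j + (φ (f a) - t a) := by
    intro j
    by_cases hj : j = a
    · subst hj; ring
    · have := hBc ⟨j, hj⟩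
      simp only [map_sub] at this
      linarith
  have hdot : ∑ j, lam j * t j = 0 := by
    have hterm : ∀ j, lam j * t j =
        (if j = a then lam j * lam c else 0) + (if j = c then lam j * (-lam a) else 0) := by
      intro j
      by_cases h1 : j = a
      · subst h1; simp [ht, hac]
      · by_cases h2 : j = c <;> simp [ht, h1, h2, Ne.symm hac]
    rw [Finset.sum_congr rfl (fun j _ => hterm j), Finset.sum_add_distrib,
      Finset.sum_ite_eq' Finset.univ a (fun j => lam j * lam c),
      Finset.sum_ite_eq' Finset.univ c (fun j => lam j * (-lam a))]
    simp only [Finset.mem_univ, if_true]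
    ring
  have hu : φ (f a) = t a := by
    have h0 : φ (∑ j, lam j • f j) = 0 := by rw [hzero, map_zero]
    rw [map_sum] at h0
    simp only [map_smul, smul_eq_mul] at h0
    have h1 : ∀ j : Fin (d + 1), lam j * φ (f j) = lam j * t j + lam j * (φ (f a) - t a) := by
      intro j; rw [key j]; ring
    rw [Finset.sum_congr rfl (fun j _ => h1 j), Finset.sum_add_distrib, hdot,
      ← Finset.sum_mul, hsum1] at h0
    linarith
  have hphi : ∀ j, φ (f j) = t j := fun j => by rw [key j, hu]; ring
  intro hcone
  have hfa : f a ∈ posHull G := by rw [hcone]; trivial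
  have hle : φ (f a) ≤ 0 := by
    refine posHull_subset_halfspace φ (fun g hg => ?_) _ hfa
    rcases hG g hg with ⟨j, hj, rfl⟩ | ⟨j, hj, rfl⟩
    · rw [hphi j]
      by_cases h2 : j = c
      · subst h2
        simp only [ht, if_neg (Ne.symm hac), if_pos rfl]
        exact neg_nonpos.mpr (hpos a).le
      · simp [ht, hj, h2]
    · rw [map_neg, hphi j]
      by_cases h2 : j = a
      · subst h2
        simp only [ht, if_pos rfl]
        exact neg_nonpos.mpr (hpos c).le
      · simp [ht, hj, h2]
  rw [hphi a] at hle
  have : t a = lam c := by simp [ht]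
  rw [this] at hle
  exact absurd hle (not_le.mpr (hpos c))

theorem pcase_sharp (d : ℕ) (f : Fin (d + 1) → EuclideanSpace ℝ (Fin d))
    (haff : AffineIndependent ℝ f)
    (hint : (0 : EuclideanSpace ℝ (Fin d)) ∈ interior (convexHull ℝ (Set.range f)))
    (X : Fin (2 * d) → Set (EuclideanSpace ℝ (Fin d)))
    (hXdef : ∀ i : Fin (2 * d),
      X i = if (i : ℕ) < d then Set.range f else -(Set.range f)) :
    (∀ i, posHull (X i) = Set.univ) ∧
    ∀ I : Finset (Fin (2 * d)), I ≠ Finset.univ →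
      ∀ x : Fin (2 * d) → EuclideanSpace ℝ (Fin d),
        (∀ i ∈ I, x i ∈ X i) → posHull (x '' ↑I) ≠ Set.univ := by
  classical
  have hnegint : (0 : EuclideanSpace ℝ (Fin d)) ∈
      interior (convexHull ℝ (-(Set.range f))) := by
    rw [convexHull_neg]
    have h2 := (Homeomorph.neg (EuclideanSpace ℝ (Fin d))).image_interior
      (convexHull ℝ (Set.range f))
    have h0 : (0 : EuclideanSpace ℝ (Fin d)) ∈
        (Homeomorph.neg (EuclideanSpace ℝ (Fin d))) '' interior (convexHull ℝ (Set.range f)) :=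
      ⟨0, hint, by simp⟩
    rw [h2] at h0
    have himg : (Homeomorph.neg (EuclideanSpace ℝ (Fin d))) '' (convexHull ℝ (Set.range f)) =
        -(convexHull ℝ (Set.range f)) := by
      rw [show ⇑(Homeomorph.neg (EuclideanSpace ℝ (Fin d))) = (fun y => -y) from rfl]
      exact Set.image_neg_eq_neg
    rwa [himg] at h0
  constructor
  · intro i
    rw [hXdef i]
    split_ifs
    · exact posHull_eq_univ_of_zero_mem_interior hint
    · exact posHull_eq_univ_of_zero_mem_interior hnegint
  · intro I hI x hx
    obtain ⟨i₀, hi₀⟩ : ∃ i₀, i₀ ∉ I := by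
      by_contra h
      push_neg at h
      exact hI (Finset.eq_univ_iff_forall.mpr h)
    rcases Nat.eq_zero_or_pos d with rfl | hd
    · exact absurd i₀.2 (by omega)
    have hchoice : ∀ i : Fin (2 * d), ∃ j : Fin (d + 1),
        i ∈ I → (((i : ℕ) < d → x i = f j) ∧ (¬(i : ℕ) < d → x i = -f j)) := by
      intro i
      by_cases hiI : i ∈ I
      · have hxi := hx i hiI
        rw [hXdef i] at hxi
        by_cases hlt : (i : ℕ) < d
        · rw [if_pos hlt] at hxi
          obtain ⟨j, hj⟩ := hxi
          exact ⟨j, fun _ => ⟨fun _ => hj.symm, fun h => absurd hlt h⟩⟩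
        · rw [if_neg hlt] at hxi
          rw [Set.mem_neg] at hxi
          obtain ⟨j, hj⟩ := hxi
          exact ⟨j, fun _ => ⟨fun h => absurd h hlt, fun _ => by rw [hj, neg_neg]⟩⟩
      · exact ⟨⟨0, Nat.succ_pos d⟩, fun h => absurd h hiI⟩
    choose g hg using hchoice
    set I₁ := I.filter (fun i : Fin (2 * d) => (i : ℕ) < d) with hI₁
    set I₂ := I.filter (fun i : Fin (2 * d) => ¬(i : ℕ) < d) with hI₂
    set V₁ := I₁.image g with hV₁def
    set V₂ := I₂.image g with hV₂def
    have hinj₁ : Set.InjOn (fun i : Fin (2 * d) => (⟨(i : ℕ) % d, Nat.mod_lt _ hd⟩ : Fin d)) ↑I₁ := by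
      intro i hi i' hi' hii
      rw [Finset.mem_coe, hI₁, Finset.mem_filter] at hi hi'
      have h1 : (i : ℕ) % d = (i' : ℕ) % d := congrArg Fin.val hii
      rw [Nat.mod_eq_of_lt hi.2, Nat.mod_eq_of_lt hi'.2] at h1
      exact Fin.ext h1
    have hinj₂ : Set.InjOn (fun i : Fin (2 * d) => (⟨(i : ℕ) - d, by have := i.2; omega⟩ : Fin d)) ↑I₂ := by
      intro i hi i' hi' hii
      rw [Finset.mem_coe, hI₂, Finset.mem_filter] at hi hi'
      have h1 : (i : ℕ) - d = (i' : ℕ) - d := congrArg Fin.val hii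
      exact Fin.ext (by omega)
    have hI₁card : I₁.card ≤ d := by
      have := Finset.card_le_card_of_injOn _ (fun i _ => Finset.mem_univ _) hinj₁
      simpa using this
    have hI₂card : I₂.card ≤ d := by
      have := Finset.card_le_card_of_injOn _ (fun i _ => Finset.mem_univ _) hinj₂
      simpa using this
    have hV₁ : V₁.card ≤ I₁.card := Finset.card_image_le
    have hV₂ : V₂.card ≤ I₂.card := Finset.card_image_le
    have hexists : ∀ W : Finset (Fin (d + 1)), W.card < d + 1 → ∃ a, a ∉ W := by
      intro W hW
      by_contra h
      push_neg at h
      have : W = Finset.univ := Finset.eq_univ_iff_forall.mpr h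
      rw [this, Finset.card_univ, Fintype.card_fin] at hW
      omega
    have hmemV₁ : ∀ i, i ∈ I → (i : ℕ) < d → g i ∈ V₁ := by
      intro i hiI hlt
      exact Finset.mem_image_of_mem g (Finset.mem_filter.mpr ⟨hiI, hlt⟩)
    have hmemV₂ : ∀ i, i ∈ I → ¬(i : ℕ) < d → g i ∈ V₂ := by
      intro i hiI hlt
      exact Finset.mem_image_of_mem g (Finset.mem_filter.mpr ⟨hiI, hlt⟩)
    have main : ∀ a c : Fin (d + 1), a ≠ c → a ∉ V₁ → c ∉ V₂ →
        posHull (x '' ↑I) ≠ Set.univ := by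
      intro a c hac ha hc
      refine cone_ne_univ f haff hint a c hac _ ?_
      rintro gval ⟨i, hi, rfl⟩
      have hiI : i ∈ I := hi
      by_cases hlt : (i : ℕ) < d
      · exact Or.inl ⟨g i, fun h => ha (h ▸ hmemV₁ i hiI hlt), (hg i hiI).1 hlt⟩
      · exact Or.inr ⟨g i, fun h => hc (h ▸ hmemV₂ i hiI hlt), (hg i hiI).2 hlt⟩
    by_cases hlt₀ : (i₀ : ℕ) < d
    · -- first half misses i₀ : I₁.card ≤ d - 1
      have hI₁' : I₁.card ≤ d - 1 := by
        have hmap : ∀ i ∈ I₁, (fun i : Fin (2 * d) => (⟨(i : ℕ) % d, Nat.mod_lt _ hd⟩ : Fin d)) i ∈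
            (Finset.univ.erase (⟨(i₀ : ℕ), hlt₀⟩ : Fin d)) := by
          intro i hi
          rw [hI₁, Finset.mem_filter] at hi
          refine Finset.mem_erase.mpr ⟨?_, Finset.mem_univ _⟩
          intro heq
          apply hi₀
          have h1 : (i : ℕ) % d = (i₀ : ℕ) := congrArg Fin.val heq
          rw [Nat.mod_eq_of_lt hi.2] at h1
          exact Fin.ext h1 ▸ hi.1
        have := Finset.card_le_card_of_injOn _ hmap hinj₁
        rwa [Finset.card_erase_of_mem (Finset.mem_univ _), Finset.card_univ,
          Fintype.card_fin] at this
      obtain ⟨c, hc⟩ := hexists V₂ (by omega)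
      obtain ⟨a, ha⟩ := hexists (V₁ ∪ {c}) (by
        have := Finset.card_union_le V₁ {c}
        simp only [Finset.card_singleton] at this
        omega)
      have ha₁ : a ∉ V₁ := fun h => ha (Finset.mem_union_left _ h)
      have hac : a ≠ c := fun h => ha (Finset.mem_union_right _ (by simp [h]))
      exact main a c hac ha₁ hc
    · -- second half misses i₀ : I₂.card ≤ d - 1
      have hI₂' : I₂.card ≤ d - 1 := by
        have hd2 : (i₀ : ℕ) - d < d := by have := i₀.2; omega
        have hmap : ∀ i ∈ I₂,
            (fun i : Fin (2 * d) => (⟨(i : ℕ) - d, by have := i.2; omega⟩ : Fin d)) i ∈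
            (Finset.univ.erase (⟨(i₀ : ℕ) - d, hd2⟩ : Fin d)) := by
          intro i hi
          rw [hI₂, Finset.mem_filter] at hi
          refine Finset.mem_erase.mpr ⟨?_, Finset.mem_univ _⟩
          intro heq
          apply hi₀
          have h1 : (i : ℕ) - d = (i₀ : ℕ) - d := congrArg Fin.val heq
          have h4 := i.2
          have h5 := i₀.2
          have h6 : (i : ℕ) = (i₀ : ℕ) := by
            have h7 := hi.2
            omega
          exact Fin.ext h6 ▸ hi.1
        have := Finset.card_le_card_of_injOn _ hmap hinj₂
        rwa [Finset.card_erase_of_mem (Finset.mem_univ _), Finset.card_univ,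
          Fintype.card_fin] at this
      obtain ⟨a, ha⟩ := hexists V₁ (by omega)
      obtain ⟨c, hc⟩ := hexists (V₂ ∪ {a}) (by
        have := Finset.card_union_le V₂ {a}
        simp only [Finset.card_singleton] at this
        omega)
      have hc₂ : c ∉ V₂ := fun h => hc (Finset.mem_union_left _ h)
      have hac : a ≠ c := fun h => hc (Finset.mem_union_right _ (by simp [h]))
      exact main a c hac ha hc₂
end

section
/- In the Basis Case (X_i = {±e₁,…,±e_d} for every i ∈ [2d], with e₁,…,e_d a basis of ℝ^d), the number of transversals T = (x₁,…,x_{2d}), x_i ∈ X_i, with pos {x₁,…,x_{2d}} = ℝ^d equals (2d)!. -/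
open scoped BigOperators

/-- A point strictly separated from a set by a linear functional is not in its conic hull. -/
lemma notMem_posHull_of_sep {d : ℕ} (A : Set (EuclideanSpace ℝ (Fin d)))
    (φ : EuclideanSpace ℝ (Fin d) →ₗ[ℝ] ℝ) (hA : ∀ a ∈ A, φ a ≤ 0)
    (p : EuclideanSpace ℝ (Fin d)) (hp : 0 < φ p) : p ∉ posHull A := by
  rintro ⟨n, c, f, hc, hf, hsum⟩
  have : φ p ≤ 0 := by
    rw [hsum, map_sum]
    apply Finset.sum_nonpos
    intro i _
    rw [map_smul, smul_eq_mul]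
    exact mul_nonpos_of_nonneg_of_nonpos (hc i) (hA _ (hf i))
  linarith

theorem bcase_count (d : ℕ) (e : Fin d → EuclideanSpace ℝ (Fin d))
    (he : LinearIndependent ℝ e) (hspan : Submodule.span ℝ (Set.range e) = ⊤)
    (X : Set (EuclideanSpace ℝ (Fin d)))
    (hXdef : X = Set.range e ∪ (-(Set.range e))) :
    {x : Fin (2 * d) → EuclideanSpace ℝ (Fin d) |
        (∀ i, x i ∈ X) ∧ posHull (Set.range x) = Set.univ}.ncard
      = (2 * d).factorial := by
  classical
  -- the basis
  let B : Module.Basis (Fin d) ℝ (EuclideanSpace ℝ (Fin d)) := Module.Basis.mk he hspan.ge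
  have hB : ∀ i, B i = e i := fun i => Module.Basis.mk_apply he hspan.ge i
  have hrepr : ∀ i j, B.repr (e i) j = if i = j then 1 else 0 := by
    intro i j
    rw [← hB i, Module.Basis.repr_self, Finsupp.single_apply]
  have hreprneg : ∀ i j, B.repr (-e i) j = if i = j then -1 else 0 := by
    intro i j
    rw [map_neg, Finsupp.coe_neg, Pi.neg_apply, hrepr]
    split <;> simp
  -- elements e i and -e j are all distinct
  have hne : ∀ i j, e i ≠ -e j := by
    intro i j h
    have h0 : e i + e j = 0 := by rw [h]; abel
    have h1 : B.repr (e i) i + B.repr (e j) i = 0 := by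
      have := congrArg (fun v => (B.repr v) i) h0
      simpa using this
    rw [hrepr, hrepr, if_pos rfl] at h1
    by_cases hji : j = i <;> simp [hji] at h1
  have hmem_e : ∀ i, e i ∈ X := by
    intro i; rw [hXdef]; exact Or.inl ⟨i, rfl⟩
  have hmem_ne : ∀ i, -e i ∈ X := by
    intro i; rw [hXdef]; right; rw [Set.mem_neg, neg_neg]; exact ⟨i, rfl⟩
  -- posHull X = univ
  have hXuniv : posHull X = Set.univ := by
    apply Set.eq_univ_of_forall
    intro v
    refine ⟨d, fun i => |B.repr v i|, fun i => if 0 ≤ B.repr v i then e i else -e i,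
      fun i => abs_nonneg _, fun i => ?_, ?_⟩
    · dsimp only
      split
      · exact hmem_e i
      · exact hmem_ne i
    · conv_lhs => rw [← B.sum_repr v]
      refine Finset.sum_congr rfl fun i _ => ?_
      rw [hB]
      dsimp only
      by_cases h : 0 ≤ B.repr v i
      · rw [if_pos h, abs_of_nonneg h]
      · rw [if_neg h, abs_of_neg (not_le.mp h), neg_smul, smul_neg, neg_neg]
  -- the enumeration of X
  let bb : Fin (2 * d) → EuclideanSpace ℝ (Fin d) := fun k =>
    Sum.elim e (fun i => -e i) (finSumFinEquiv.symm (finCongr (two_mul d) k))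
  have hbbinj : Function.Injective bb := by
    have h1 : Function.Injective (Sum.elim e (fun i => -e i)) := by
      apply Function.Injective.sumElim he.injective
      · intro a b h
        exact he.injective (neg_injective h)
      · intro a b h
        exact hne a b h
    exact h1.comp ((finSumFinEquiv.symm.injective).comp (finCongr (two_mul d)).injective)
  have hbbrange : Set.range bb = X := by
    have hsurj : Function.Surjective
        (fun k : Fin (2 * d) => finSumFinEquiv.symm (finCongr (two_mul d) k)) :=
      (finSumFinEquiv.symm.surjective).comp (finCongr (two_mul d)).surjective
    have h1 : Set.range bb = Set.range (Sum.elim e fun i => -e i) :=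
      hsurj.range_comp _
    rw [h1, Set.Sum.elim_range, hXdef]
    congr 1
    ext v
    simp only [Set.mem_range, Set.mem_neg]
    constructor
    · rintro ⟨i, rfl⟩; exact ⟨i, by rw [neg_neg]⟩
    · rintro ⟨i, hi⟩; exact ⟨i, by rw [hi, neg_neg]⟩
  -- membership in the set is equivalent to range x = X
  have hkey : ∀ x : Fin (2 * d) → EuclideanSpace ℝ (Fin d),
      ((∀ i, x i ∈ X) ∧ posHull (Set.range x) = Set.univ) ↔ Set.range x = X := by
    intro x
    constructor
    · rintro ⟨hx, hpos⟩
      apply Set.Subset.antisymm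
      · rintro _ ⟨i, rfl⟩; exact hx i
      · intro p hp
        by_contra hpx
        -- construct separating functional
        have hsep : ∃ φ : EuclideanSpace ℝ (Fin d) →ₗ[ℝ] ℝ,
            0 < φ p ∧ ∀ a ∈ Set.range x, φ a ≤ 0 := by
          rw [hXdef] at hp
          rcases hp with ⟨j, rfl⟩ | hp
          · refine ⟨B.coord j, ?_, ?_⟩
            · rw [Module.Basis.coord_apply, hrepr, if_pos rfl]; norm_num
            · rintro a ha
              have haX := hx (ha.choose)
              have haa : x ha.choose = a := ha.choose_spec
              rw [hXdef, haa] at haX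
              rcases haX with ⟨k, rfl⟩ | haX
              · rw [Module.Basis.coord_apply, hrepr]
                split
                · next h => exact absurd ha (by rw [h]; exact hpx)
                · exact le_refl 0
              · rw [Set.mem_neg] at haX
                obtain ⟨k, hk⟩ := haX
                have hak : a = -e k := by rw [hk, neg_neg]
                rw [hak, Module.Basis.coord_apply, hreprneg]
                split <;> norm_num
          · rw [Set.mem_neg] at hp
            obtain ⟨j, hj⟩ := hp
            have hpj : p = -e j := by rw [hj, neg_neg]
            subst hpj
            refine ⟨-B.coord j, ?_, ?_⟩
            · rw [LinearMap.neg_apply, Module.Basis.coord_apply, hreprneg, if_pos rfl]; norm_num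
            · rintro a ha
              have haX := hx (ha.choose)
              have haa : x ha.choose = a := ha.choose_spec
              rw [hXdef, haa] at haX
              rcases haX with ⟨k, rfl⟩ | haX
              · rw [LinearMap.neg_apply, Module.Basis.coord_apply, hrepr]
                split <;> norm_num
              · rw [Set.mem_neg] at haX
                obtain ⟨k, hk⟩ := haX
                have hak : a = -e k := by rw [hk, neg_neg]
                subst hak
                rw [LinearMap.neg_apply, Module.Basis.coord_apply, hreprneg]
                split
                · next h => exact absurd ha (by rw [h]; exact hpx)
                · norm_num
        obtain ⟨φ, hφp, hφa⟩ := hsep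
        exact notMem_posHull_of_sep _ φ hφa p hφp (hpos ▸ Set.mem_univ p)
    · intro hr
      refine ⟨fun i => hr ▸ Set.mem_range_self i, ?_⟩
      rw [hr, hXuniv]
  -- now count
  have hset : {x : Fin (2 * d) → EuclideanSpace ℝ (Fin d) |
      (∀ i, x i ∈ X) ∧ posHull (Set.range x) = Set.univ}
      = (fun σ : Equiv.Perm (Fin (2 * d)) => bb ∘ σ) '' Set.univ := by
    ext x
    rw [Set.mem_setOf_eq, hkey x]
    constructor
    · intro hr
      have hxmem : ∀ i, ∃ j, bb j = x i := by
        intro i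
        have : x i ∈ Set.range bb := by rw [hbbrange, ← hr]; exact Set.mem_range_self i
        exact this
      choose g hg using hxmem
      have hgsurj : Function.Surjective g := by
        intro j
        have : bb j ∈ Set.range x := by rw [hr, ← hbbrange]; exact Set.mem_range_self j
        obtain ⟨i, hi⟩ := this
        exact ⟨i, hbbinj (by rw [hg i, hi])⟩
      have hgbij : Function.Bijective g := Finite.surjective_iff_bijective.mp hgsurj
      refine ⟨Equiv.ofBijective g hgbij, Set.mem_univ _, ?_⟩
      funext i
      exact hg i
    · rintro ⟨σ, _, rfl⟩
      rw [Set.range_comp, Equiv.range_eq_univ, Set.image_univ, hbbrange]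
  have hinj : Function.Injective (fun σ : Equiv.Perm (Fin (2 * d)) => bb ∘ σ) := by
    intro σ τ h
    exact Equiv.ext fun i => hbbinj (congrFun h i)
  rw [hset, Set.ncard_image_of_injective _ hinj, Set.ncard_univ,
    Nat.card_eq_fintype_card, Fintype.card_perm, Fintype.card_fin]
end

section
/- In the Positive Basis Case (X₁ = … = X_d = F and X_{d+1} = … = X_{2d} = −F, where F is the vertex set of a d-simplex with 0 in its interior), the number of transversals (x₁,…,x_{2d}), x_i ∈ X_i, with pos {x₁,…,x_{2d}} = ℝ^d equals (d+1)!·d!. -/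
open scoped BigOperators

section Aux

variable {d : ℕ}

lemma mem_posHull_of_mem {A : Set (EuclideanSpace ℝ (Fin d))} {a : EuclideanSpace ℝ (Fin d)}
    (h : a ∈ A) : a ∈ posHull A :=
  ⟨1, fun _ => 1, fun _ => a, fun _ => zero_le_one, fun _ => h, by simp⟩

lemma zero_mem_posHull (A : Set (EuclideanSpace ℝ (Fin d))) :
    (0 : EuclideanSpace ℝ (Fin d)) ∈ posHull A :=
  ⟨0, Fin.elim0, Fin.elim0, fun i => i.elim0, fun i => i.elim0, by simp⟩

lemma add_mem_posHull {A : Set (EuclideanSpace ℝ (Fin d))} {x y : EuclideanSpace ℝ (Fin d)}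
    (hx : x ∈ posHull A) (hy : y ∈ posHull A) : x + y ∈ posHull A := by
  obtain ⟨n, c, u, hc, hu, rfl⟩ := hx
  obtain ⟨m, b, w, hb, hw, rfl⟩ := hy
  refine ⟨n + m, Fin.append c b, Fin.append u w, ?_, ?_, ?_⟩
  · intro i
    refine Fin.addCases (fun i => ?_) (fun i => ?_) i
    · simpa using hc i
    · simpa using hb i
  · intro i
    refine Fin.addCases (fun i => ?_) (fun i => ?_) i
    · simpa using hu i
    · simpa using hw i
  · rw [Fin.sum_univ_add]
    simp [Fin.append_left, Fin.append_right]

lemma smul_mem_posHull {A : Set (EuclideanSpace ℝ (Fin d))} {r : ℝ} {x : EuclideanSpace ℝ (Fin d)}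
    (hr : 0 ≤ r) (hx : x ∈ posHull A) : r • x ∈ posHull A := by
  obtain ⟨n, c, u, hc, hu, rfl⟩ := hx
  refine ⟨n, fun i => r * c i, u, fun i => mul_nonneg hr (hc i), hu, ?_⟩
  rw [Finset.smul_sum]
  simp [smul_smul]

lemma neg_mem_posHull {A : Set (EuclideanSpace ℝ (Fin d))} (hA : ∀ a ∈ A, -a ∈ A)
    {x : EuclideanSpace ℝ (Fin d)} (hx : x ∈ posHull A) : -x ∈ posHull A := by
  obtain ⟨n, c, u, hc, hu, rfl⟩ := hx
  refine ⟨n, c, fun i => -u i, hc, fun i => hA _ (hu i), ?_⟩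
  rw [← Finset.sum_neg_distrib]
  simp

/-- If `A` is symmetric and spans, then its positive hull is everything. -/
lemma posHull_eq_univ_of_symm_span {A : Set (EuclideanSpace ℝ (Fin d))}
    (hA : ∀ a ∈ A, -a ∈ A) (hspan : Submodule.span ℝ A = ⊤) : posHull A = Set.univ := by
  let P : Submodule ℝ (EuclideanSpace ℝ (Fin d)) :=
    { carrier := posHull A
      add_mem' := fun hx hy => add_mem_posHull hx hy
      zero_mem' := zero_mem_posHull A
      smul_mem' := by
        intro r x hx
        rcases le_or_gt 0 r with h | h
        · exact smul_mem_posHull h hx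
        · have : r • x = (-r) • (-x) := by simp
          rw [this]
          exact smul_mem_posHull (by linarith) (neg_mem_posHull hA hx) }
  have hle : (⊤ : Submodule ℝ (EuclideanSpace ℝ (Fin d))) ≤ P := by
    rw [← hspan]
    exact Submodule.span_le.mpr fun a ha => mem_posHull_of_mem ha
  exact Set.eq_univ_of_forall fun y => hle (Submodule.mem_top)

lemma posHull_nonneg_of_nonneg {A : Set (EuclideanSpace ℝ (Fin d))}
    (φ : EuclideanSpace ℝ (Fin d) →ₗ[ℝ] ℝ) (h : ∀ a ∈ A, 0 ≤ φ a) :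
    ∀ x ∈ posHull A, 0 ≤ φ x := by
  rintro x ⟨n, c, u, hc, hu, rfl⟩
  rw [map_sum]
  refine Finset.sum_nonneg fun i _ => ?_
  rw [map_smul]
  exact mul_nonneg (hc i) (h _ (hu i))

variable {f : Fin (d + 1) → EuclideanSpace ℝ (Fin d)} {μ : Fin (d + 1) → ℝ}

lemma span_image_compl (hμpos : ∀ i, 0 < μ i) (hsum : ∑ i, μ i • f i = 0)
    (hspan : Submodule.span ℝ (Set.range f) = ⊤) (c : Fin (d + 1)) :
    Submodule.span ℝ (f '' {j | j ≠ c}) = ⊤ := by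
  set W := Submodule.span ℝ (f '' {j | j ≠ c}) with hW
  have hmem : ∀ i, f i ∈ W := by
    intro i
    by_cases hic : i = c
    · subst hic
      have h1 : μ i • f i + ∑ j ∈ Finset.univ.erase i, μ j • f j = 0 := by
        have := Finset.add_sum_erase Finset.univ (fun j => μ j • f j) (Finset.mem_univ i)
        rw [hsum] at this
        exact this
      have h2 : f i = (μ i)⁻¹ • (-(∑ j ∈ Finset.univ.erase i, μ j • f j)) := by
        have hne : μ i ≠ 0 := (hμpos i).ne'
        have : μ i • f i = -(∑ j ∈ Finset.univ.erase i, μ j • f j) := by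
          rw [eq_neg_iff_add_eq_zero]; exact h1
        rw [← this, inv_smul_smul₀ hne]
      rw [h2]
      refine Submodule.smul_mem _ _ (Submodule.neg_mem _ (Submodule.sum_mem _ fun j hj => ?_))
      refine Submodule.smul_mem _ _ (Submodule.subset_span ⟨j, ?_, rfl⟩)
      exact (Finset.mem_erase.mp hj).1
    · exact Submodule.subset_span ⟨i, hic, rfl⟩
  refine le_antisymm le_top ?_
  rw [← hspan]
  exact Submodule.span_le.mpr (by rintro _ ⟨i, rfl⟩; exact hmem i)

lemma good_dir (hμpos : ∀ i, 0 < μ i) (hsum : ∑ i, μ i • f i = 0)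
    (hspan : Submodule.span ℝ (Set.range f) = ⊤) (c : Fin (d + 1)) :
    posHull (f '' {j | j ≠ c} ∪ -(f '' {j | j ≠ c})) = Set.univ := by
  apply posHull_eq_univ_of_symm_span
  · rintro a (ha | ha)
    · right; rw [Set.mem_neg, neg_neg]; exact ha
    · left; rwa [Set.mem_neg] at ha
  · refine le_antisymm le_top ?_
    rw [← span_image_compl hμpos hsum hspan c]
    exact Submodule.span_mono Set.subset_union_left

/-- Realizing prescribed values on the `f i` by a linear functional. -/
lemma exists_dual (haff : AffineIndependent ℝ f) (hμpos : ∀ i, 0 < μ i)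
    (hμ1 : ∑ i, μ i = 1) (hsum : ∑ i, μ i • f i = 0)
    (v : Fin (d + 1) → ℝ) (hv : ∑ i, μ i * v i = 0) :
    ∃ φ : EuclideanSpace ℝ (Fin d) →ₗ[ℝ] ℝ, ∀ i, φ (f i) = v i := by
  rcases Nat.eq_zero_or_pos d with hd | hd
  · subst hd
    refine ⟨0, fun i => ?_⟩
    have h1 : μ 0 * v 0 = 0 := by simpa using hv
    have h2 : v 0 = 0 := by
      rcases mul_eq_zero.mp h1 with h | h
      · exact absurd h (hμpos 0).ne'
      · exact h
    have hi : i = 0 := Fin.fin_one_eq_zero i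
    rw [hi, h2]
    simp
  · have hli : LinearIndependent ℝ (fun j : {x : Fin (d + 1) // x ≠ 0} => f j - f 0) := by
      have := (affineIndependent_iff_linearIndependent_vsub ℝ f 0).mp haff
      simpa [vsub_eq_sub] using this
    haveI : Nonempty {x : Fin (d + 1) // x ≠ 0} := by
      refine ⟨⟨⟨1, by omega⟩, ?_⟩⟩
      intro h
      simpa using congrArg Fin.val h
    have hcard : Fintype.card {x : Fin (d + 1) // x ≠ 0} =
        Module.finrank ℝ (EuclideanSpace ℝ (Fin d)) := by
      simp [finrank_euclideanSpace_fin, Fintype.card_subtype_compl]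
    let B := basisOfLinearIndependentOfCardEqFinrank hli hcard
    have hB : ∀ j : {x : Fin (d + 1) // x ≠ 0}, B j = f j - f 0 := fun j => by
      simp [B, coe_basisOfLinearIndependentOfCardEqFinrank]
    let φ := B.constr ℝ (fun j => v j - v 0)
    have hsub : ∀ (M : Type) [AddCommGroup M] (F : Fin (d + 1) → M),
        ∑ j : {x : Fin (d + 1) // x ≠ 0}, F j = (∑ i, F i) - F 0 := by
      intro M _ F
      rw [← Finset.sum_subtype (Finset.univ.erase 0) (by simp) F]
      rw [eq_sub_iff_add_eq']
      exact Finset.add_sum_erase Finset.univ F (Finset.mem_univ 0)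
    have hφ0 : φ (f 0) = v 0 := by
      have key : f 0 = -∑ j : {x : Fin (d + 1) // x ≠ 0}, μ j • (f j - f 0) := by
        have h1 : ∑ i, μ i • (f i - f 0) = -f 0 := by
          have : ∑ i, μ i • (f i - f 0) = (∑ i, μ i • f i) - (∑ i, μ i) • f 0 := by
            rw [Finset.sum_smul, ← Finset.sum_sub_distrib]
            exact Finset.sum_congr rfl fun i _ => by rw [smul_sub]
          rw [this, hsum, hμ1, one_smul, zero_sub]
        have h2 : ∑ j : {x : Fin (d + 1) // x ≠ 0}, μ j • (f j - f 0) =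
            (∑ i, μ i • (f i - f 0)) - μ 0 • (f 0 - f 0) := by
          exact hsub (EuclideanSpace ℝ (Fin d)) (fun i => μ i • (f i - f 0))
        rw [h2, h1]
        simp
      rw [key, map_neg, map_sum]
      have : ∀ j : {x : Fin (d + 1) // x ≠ 0}, φ (μ j • (f j - f 0)) = μ j * (v j - v 0) := by
        intro j
        rw [map_smul, ← hB j]
        simp only [φ, Module.Basis.constr_basis]
        rfl
      rw [Finset.sum_congr rfl fun j _ => this j]
      have h3 : ∑ j : {x : Fin (d + 1) // x ≠ 0}, μ j * (v j - v 0) =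
          (∑ i, μ i * (v i - v 0)) - μ 0 * (v 0 - v 0) := hsub ℝ (fun i => μ i * (v i - v 0))
      have h4 : ∑ i, μ i * (v i - v 0) = (∑ i, μ i * v i) - (∑ i, μ i) * v 0 := by
        rw [Finset.sum_mul, ← Finset.sum_sub_distrib]
        exact Finset.sum_congr rfl fun i _ => by ring
      rw [h3, h4, hv, hμ1]
      ring
    refine ⟨φ, fun i => ?_⟩
    by_cases hi : i = 0
    · subst hi; exact hφ0
    · have : φ (f i) = φ (f i - f 0) + φ (f 0) := by
        rw [← map_add]; congr 1; abel
      rw [this, hφ0, ← hB ⟨i, hi⟩]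
      simp only [φ, Module.Basis.constr_basis]
      ring

/-- Construction of a separating coefficient vector for "bad" pairs `(S, T)`. -/
lemma bad_vector (hμpos : ∀ i, 0 < μ i) (S T : Set (Fin (d + 1)))
    (hS : Sᶜ.Nonempty) (hT : Tᶜ.Nonempty)
    (hbad : ¬ ∃ c, S = {j | j ≠ c} ∧ T = {j | j ≠ c}) :
    ∃ v : Fin (d + 1) → ℝ, (∃ i, v i ≠ 0) ∧ (∑ i, μ i * v i = 0) ∧
      (∀ i ∈ S, 0 ≤ v i) ∧ (∀ i ∈ T, v i ≤ 0) := by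
  classical
  by_cases hST : S = T
  · subst hST
    obtain ⟨c, hc⟩ := hS
    have hSc : S ≠ {j | j ≠ c} := fun h => hbad ⟨c, h, h⟩
    have hsub : S ⊆ {j | j ≠ c} := fun i hi => by
      intro h; exact hc (h ▸ hi)
    obtain ⟨c', hc'c, hc'S⟩ : ∃ c', c' ≠ c ∧ c' ∉ S := by
      by_contra h
      push_neg at h
      exact hSc (Set.Subset.antisymm hsub fun j hj => h j hj)
    refine ⟨fun i => (if i = c then (μ c)⁻¹ else 0) + (if i = c' then -(μ c')⁻¹ else 0),
      ⟨c, ?_⟩, ?_, ?_, ?_⟩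
    · dsimp only
      rw [if_pos rfl, if_neg (fun h : c = c' => hc'c h.symm)]
      simpa using (hμpos c).ne'
    · rw [Finset.sum_congr rfl (fun i _ => mul_add (μ i) _ _), Finset.sum_add_distrib]
      simp only [mul_ite, mul_zero, Finset.sum_ite_eq', Finset.mem_univ, if_true]
      rw [mul_inv_cancel₀ (hμpos c).ne', mul_neg, mul_inv_cancel₀ (hμpos c').ne']
      ring
    · intro i hi
      dsimp only
      rw [if_neg (hsub hi), if_neg (fun h : i = c' => hc'S (h ▸ hi))]
      norm_num
    · intro i hi
      dsimp only
      rw [if_neg (hsub hi), if_neg (fun h : i = c' => hc'S (h ▸ hi))]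
      norm_num
  · set a : ℝ := ∑ i ∈ Finset.univ.filter (· ∉ S), μ i with ha
    set b : ℝ := ∑ i ∈ Finset.univ.filter (· ∉ T), μ i with hb
    have hapos : 0 < a := by
      obtain ⟨i, hi⟩ := hS
      refine Finset.sum_pos (fun j _ => hμpos j) ⟨i, ?_⟩
      simp only [Finset.mem_filter, Finset.mem_univ, true_and]
      exact hi
    have hbpos : 0 < b := by
      obtain ⟨i, hi⟩ := hT
      refine Finset.sum_pos (fun j _ => hμpos j) ⟨i, ?_⟩
      simp only [Finset.mem_filter, Finset.mem_univ, true_and]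
      exact hi
    refine ⟨fun i => (if i ∈ T then 0 else a) - (if i ∈ S then 0 else b), ?_, ?_, ?_, ?_⟩
    · obtain ⟨i, hi⟩ : ∃ i, ¬(i ∈ S ↔ i ∈ T) := by
        by_contra h
        push_neg at h
        exact hST (Set.ext fun i => h i)
      rw [iff_iff_implies_and_implies, not_and_or] at hi
      rcases hi with hi | hi
      · push_neg at hi
        refine ⟨i, ?_⟩
        dsimp only
        rw [if_neg hi.2, if_pos hi.1]
        simpa using hapos.ne'
      · push_neg at hi
        refine ⟨i, ?_⟩
        dsimp only
        rw [if_pos hi.1, if_neg hi.2]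
        simpa using hbpos.ne'

    · rw [Finset.sum_congr rfl (fun i _ => mul_sub (μ i) _ _), Finset.sum_sub_distrib]
      have e1 : ∑ i, μ i * (if i ∈ T then 0 else a) = b * a := by
        rw [Finset.sum_congr rfl (fun i _ => by rw [mul_ite, mul_zero])]
        rw [Finset.sum_ite, Finset.sum_const_zero, zero_add, ← Finset.sum_mul]
      have e2 : ∑ i, μ i * (if i ∈ S then 0 else b) = a * b := by
        rw [Finset.sum_congr rfl (fun i _ => by rw [mul_ite, mul_zero])]
        rw [Finset.sum_ite, Finset.sum_const_zero, zero_add, ← Finset.sum_mul]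
      rw [e1, e2]
      ring
    · intro i hi
      dsimp only
      rw [if_pos hi]
      by_cases h : i ∈ T
      · simp [h]
      · simp [h, le_of_lt hapos]
    · intro i hi
      dsimp only
      rw [if_pos hi]
      by_cases h : i ∈ S
      · simp [h]
      · simp [h, le_of_lt hbpos]

end Aux

/-- Counting lemma: pairs of "surjections onto a co-singleton" are counted by `(d+1)! * d!`. -/
lemma count_good (d : ℕ) (e₁ e₂ : Fin d → Fin (2 * d))
    (he₁ : ∀ i, ((e₁ i : Fin (2 * d)) : ℕ) = (i : ℕ))
    (he₂ : ∀ i, ((e₂ i : Fin (2 * d)) : ℕ) = d + (i : ℕ)) :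
    {g : Fin (2 * d) → Fin (d + 1) | ∃ c : Fin (d + 1),
        Set.range (g ∘ e₁) = {j | j ≠ c} ∧ Set.range (g ∘ e₂) = {j | j ≠ c}}.ncard
      = (d + 1).factorial * d.factorial := by
  classical
  set K := Fin (d + 1)
  -- the splitting equivalence
  let Ψ : (Fin (2 * d) → K) ≃ (Fin d → K) × (Fin d → K) :=
    { toFun := fun g => (g ∘ e₁, g ∘ e₂)
      invFun := fun p j =>
        if h : (j : ℕ) < d then p.1 ⟨(j : ℕ), h⟩
        else p.2 ⟨(j : ℕ) - d, by have := j.isLt; omega⟩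
      left_inv := by
        intro g
        funext j
        by_cases h : (j : ℕ) < d
        · simp only [dif_pos h]
          exact congrArg g (Fin.ext (he₁ ⟨(j : ℕ), h⟩))
        · simp only [dif_neg h]
          refine congrArg g (Fin.ext ?_)
          rw [he₂]
          simp only [Fin.val_mk]
          have := j.isLt
          omega
      right_inv := by
        intro p
        refine Prod.ext ?_ ?_
        · funext i
          have h : ((e₁ i : Fin (2 * d)) : ℕ) < d := by rw [he₁]; exact i.isLt
          simp only [Function.comp_apply, dif_pos h]
          exact congrArg p.1 (Fin.ext (by simp [he₁]))
        · funext i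
          have h : ¬ ((e₂ i : Fin (2 * d)) : ℕ) < d := by rw [he₂]; omega
          simp only [Function.comp_apply, dif_neg h]
          exact congrArg p.2 (Fin.ext (by simp [he₂])) }
  set Pset : Set ((Fin d → K) × (Fin d → K)) :=
    {p | ∃ c : K, Set.range p.1 = {j | j ≠ c} ∧ Set.range p.2 = {j | j ≠ c}} with hPset
  have hpre : {g : Fin (2 * d) → K | ∃ c : K,
      Set.range (g ∘ e₁) = {j | j ≠ c} ∧ Set.range (g ∘ e₂) = {j | j ≠ c}} = Ψ ⁻¹' Pset := rfl
  rw [hpre]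
  have himg : Ψ ⁻¹' Pset = Ψ.symm '' Pset := by
    rw [Equiv.image_eq_preimage_symm, Equiv.symm_symm]
  rw [himg, Set.ncard_image_of_injective _ Ψ.symm.injective]
  rw [← Nat.card_coe_set_eq]
  -- uniqueness of the missing element
  have huniq : ∀ {c c' : K}, ({j | j ≠ c} : Set K) = {j | j ≠ c'} → c = c' := by
    intro c c' h
    by_contra hne
    have h1 : c' ∈ ({j | j ≠ c} : Set K) := fun hh => hne hh.symm
    rw [h] at h1
    exact h1 rfl
  -- subtypes of functions with prescribed range
  let H : K → Type := fun c => {h : Fin d → K // Set.range h = {j | j ≠ c}}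
  -- the gathering bijection
  let F : (Σ c : K, H c × H c) → ↥Pset := fun y =>
    ⟨(y.2.1.1, y.2.2.1), ⟨y.1, y.2.1.2, y.2.2.2⟩⟩
  have hFbij : Function.Bijective F := by
    constructor
    · rintro ⟨c, h₁, h₂⟩ ⟨c', h₁', h₂'⟩ heq
      have hval : (h₁.1, h₂.1) = (h₁'.1, h₂'.1) := congrArg Subtype.val heq
      have hv1 : h₁.1 = h₁'.1 := congrArg Prod.fst hval
      have hv2 : h₂.1 = h₂'.1 := congrArg Prod.snd hval
      have hcc : c = c' := by
        refine huniq ?_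
        rw [← h₁.2, ← h₁'.2, hv1]
      subst hcc
      exact congrArg (Sigma.mk c) (Prod.ext (Subtype.ext hv1) (Subtype.ext hv2))
    · rintro ⟨⟨p₁, p₂⟩, hp⟩
      obtain ⟨c, h1, h2⟩ := hp
      exact ⟨⟨c, ⟨p₁, h1⟩, ⟨p₂, h2⟩⟩, Subtype.ext rfl⟩
  have hcard_c : ∀ c : K, Fintype.card {j : K // j ≠ c} = d := by
    intro c
    simp [K, Fintype.card_subtype_compl]
  -- each fiber is equivalent to the permutations of `Fin d`
  have eqvQ : ∀ c : K, H c ≃ (Fin d ≃ Fin d) := by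
    intro c
    have key : ∀ (h : H c) (i : Fin d), h.1 i ≠ c := by
      intro h i
      have hmem : h.1 i ∈ Set.range h.1 := Set.mem_range_self i
      rw [h.2] at hmem
      exact hmem
    have e1 : H c ≃ (Fin d ≃ {j : K // j ≠ c}) :=
      { toFun := fun h => Equiv.ofBijective (fun i => ⟨h.1 i, key h i⟩) (by
          rw [Fintype.bijective_iff_surjective_and_card]
          constructor
          · rintro ⟨j, hj⟩
            have : j ∈ Set.range h.1 := by rw [h.2]; exact hj
            obtain ⟨i, hi⟩ := this
            exact ⟨i, Subtype.ext hi⟩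
          · simp [hcard_c c])
        invFun := fun e => ⟨fun i => (e i).1, by
          ext j
          constructor
          · rintro ⟨i, rfl⟩
            exact (e i).2
          · intro hj
            exact ⟨e.symm ⟨j, hj⟩, by simp⟩⟩
        left_inv := fun h => Subtype.ext rfl
        right_inv := fun e => Equiv.ext fun i => Subtype.ext rfl }
    exact e1.trans (Equiv.equivCongr (Equiv.refl _) (Fintype.equivFinOfCardEq (hcard_c c)))
  have hchain : Nat.card ↥Pset = Nat.card (K × ((Fin d ≃ Fin d) × (Fin d ≃ Fin d))) := by
    rw [← Nat.card_congr (Equiv.ofBijective F hFbij)]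
    exact Nat.card_congr ((Equiv.sigmaCongrRight fun c =>
      Equiv.prodCongr (eqvQ c) (eqvQ c)).trans (Equiv.sigmaEquivProd K _))
  rw [hchain, Nat.card_eq_fintype_card, Fintype.card_prod, Fintype.card_prod,
    Fintype.card_equiv (Equiv.refl _), Fintype.card_fin, Fintype.card_fin,
    Nat.factorial_succ]
  ring


theorem pcase_count (d : ℕ) (f : Fin (d + 1) → EuclideanSpace ℝ (Fin d))
    (haff : AffineIndependent ℝ f)
    (hint : (0 : EuclideanSpace ℝ (Fin d)) ∈ interior (convexHull ℝ (Set.range f)))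
    (X : Fin (2 * d) → Set (EuclideanSpace ℝ (Fin d)))
    (hXdef : ∀ i : Fin (2 * d),
      X i = if (i : ℕ) < d then Set.range f else -(Set.range f)) :
    {x : Fin (2 * d) → EuclideanSpace ℝ (Fin d) |
        (∀ i, x i ∈ X i) ∧ posHull (Set.range x) = Set.univ}.ncard
      = (d + 1).factorial * d.factorial := by
  classical
  -- Barycentric coordinates of the origin give a strictly positive linear relation.
  have htop : affineSpan ℝ (Set.range f) = ⊤ :=
    affineSpan_eq_top_of_nonempty_interior ⟨0, hint⟩
  let b : AffineBasis (Fin (d + 1)) ℝ (EuclideanSpace ℝ (Fin d)) := ⟨f, haff, htop⟩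
  set μ : Fin (d + 1) → ℝ := fun i => b.coord i 0 with hμdef
  have hμpos : ∀ i, 0 < μ i := by
    have h0 : (0 : EuclideanSpace ℝ (Fin d)) ∈ interior (convexHull ℝ (Set.range ⇑b)) := hint
    rw [b.interior_convexHull] at h0
    exact fun i => h0 i
  have hμ1 : ∑ i, μ i = 1 := b.sum_coord_apply_eq_one 0
  have hsum : ∑ i, μ i • f i = 0 := by
    have h := b.affineCombination_coord_eq_self (0 : EuclideanSpace ℝ (Fin d))
    rw [Finset.affineCombination_eq_linear_combination _ _ _ hμ1] at h
    exact h
  have hspan : Submodule.span ℝ (Set.range f) = ⊤ := by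
    have h1 : vectorSpan ℝ (Set.range f) = ⊤ := by
      rw [← direction_affineSpan, htop, AffineSubspace.direction_top]
    refine le_antisymm le_top ?_
    rw [← h1, vectorSpan_def]
    refine Submodule.span_le.mpr ?_
    rintro v hv
    rw [Set.mem_vsub] at hv
    obtain ⟨x, hx, y, hy, rfl⟩ := hv
    exact Submodule.sub_mem _ (Submodule.subset_span hx) (Submodule.subset_span hy)
  -- index embeddings and the coding map
  let e₁ : Fin d → Fin (2 * d) := fun i => ⟨(i : ℕ), by have := i.isLt; omega⟩
  let e₂ : Fin d → Fin (2 * d) := fun i => ⟨d + (i : ℕ), by have := i.isLt; omega⟩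
  have he₁ : ∀ i, ((e₁ i : Fin (2 * d)) : ℕ) = (i : ℕ) := fun i => rfl
  have he₂ : ∀ i, ((e₂ i : Fin (2 * d)) : ℕ) = d + (i : ℕ) := fun i => rfl
  let Φ : (Fin (2 * d) → Fin (d + 1)) → (Fin (2 * d) → EuclideanSpace ℝ (Fin d)) :=
    fun g j => if (j : ℕ) < d then f (g j) else -f (g j)
  have hΦapp : ∀ g j, Φ g j = if (j : ℕ) < d then f (g j) else -f (g j) := fun g j => rfl
  have hΦinj : Function.Injective Φ := by
    intro g g' h
    funext j
    have hj := congrFun h j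
    rw [hΦapp, hΦapp] at hj
    by_cases hlt : (j : ℕ) < d
    · rw [if_pos hlt, if_pos hlt] at hj
      exact haff.injective hj
    · rw [if_neg hlt, if_neg hlt, neg_inj] at hj
      exact haff.injective hj
  -- the characterization of transversals with full positive hull
  have hchar : ∀ g : Fin (2 * d) → Fin (d + 1),
      posHull (Set.range (Φ g)) = Set.univ ↔
      (∃ c, Set.range (g ∘ e₁) = {j | j ≠ c} ∧ Set.range (g ∘ e₂) = {j | j ≠ c}) := by
    intro g
    constructor
    · intro hpos
      by_contra hbad
      have hSc : (Set.range (g ∘ e₁))ᶜ.Nonempty := by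
        rw [Set.nonempty_compl]
        intro h
        have hsurj : Function.Surjective (g ∘ e₁) := Set.range_eq_univ.mp h
        have := Fintype.card_le_of_surjective _ hsurj
        simp only [Fintype.card_fin] at this
        omega
      have hTc : (Set.range (g ∘ e₂))ᶜ.Nonempty := by
        rw [Set.nonempty_compl]
        intro h
        have hsurj : Function.Surjective (g ∘ e₂) := Set.range_eq_univ.mp h
        have := Fintype.card_le_of_surjective _ hsurj
        simp only [Fintype.card_fin] at this
        omega
      obtain ⟨v, ⟨i₀, hv0⟩, hvsum, hvS, hvT⟩ := bad_vector hμpos _ _ hSc hTc hbad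
      obtain ⟨φ, hφ⟩ := exists_dual haff hμpos hμ1 hsum v hvsum
      have hnn : ∀ y ∈ posHull (Set.range (Φ g)), 0 ≤ φ y := by
        apply posHull_nonneg_of_nonneg
        rintro _ ⟨j, rfl⟩
        rw [hΦapp]
        by_cases hlt : (j : ℕ) < d
        · rw [if_pos hlt, hφ]
          refine hvS _ ⟨⟨(j : ℕ), hlt⟩, congrArg g (Fin.ext rfl)⟩
        · rw [if_neg hlt, map_neg, hφ]
          have hmem : g j ∈ Set.range (g ∘ e₂) := by
            refine ⟨⟨(j : ℕ) - d, by have := j.isLt; omega⟩, congrArg g (Fin.ext ?_)⟩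
            rw [he₂]
            simp only [Fin.val_mk]
            have := j.isLt
            omega
          have := hvT _ hmem
          linarith
      have h1 : 0 ≤ φ (f i₀) := hnn _ (hpos ▸ Set.mem_univ _)
      have h2 : 0 ≤ φ (-f i₀) := hnn _ (hpos ▸ Set.mem_univ _)
      rw [map_neg, hφ] at h2
      rw [hφ] at h1
      exact hv0 (le_antisymm (by linarith) h1)
    · rintro ⟨c, hc1, hc2⟩
      have hrange : Set.range (Φ g) = f '' {j | j ≠ c} ∪ -(f '' {j | j ≠ c}) := by
        ext y
        constructor
        · rintro ⟨j, rfl⟩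
          rw [hΦapp]
          by_cases hlt : (j : ℕ) < d
          · rw [if_pos hlt]
            left
            refine ⟨g j, ?_, rfl⟩
            have hmem : g j ∈ Set.range (g ∘ e₁) := ⟨⟨(j : ℕ), hlt⟩, congrArg g (Fin.ext rfl)⟩
            rw [hc1] at hmem
            exact hmem
          · rw [if_neg hlt]
            right
            rw [Set.mem_neg, neg_neg]
            refine ⟨g j, ?_, rfl⟩
            have hmem : g j ∈ Set.range (g ∘ e₂) := by
              refine ⟨⟨(j : ℕ) - d, by have := j.isLt; omega⟩, congrArg g (Fin.ext ?_)⟩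
              rw [he₂]
              simp only [Fin.val_mk]
              have := j.isLt
              omega
            rw [hc2] at hmem
            exact hmem
        · rintro (⟨i, hi, rfl⟩ | hy)
          · have hmem : i ∈ Set.range (g ∘ e₁) := by rw [hc1]; exact hi
            obtain ⟨k, hk⟩ := hmem
            refine ⟨e₁ k, ?_⟩
            rw [hΦapp, if_pos (by rw [he₁]; exact k.isLt)]
            exact congrArg f hk
          · rw [Set.mem_neg] at hy
            obtain ⟨i, hi, hyi⟩ := hy
            have hmem : i ∈ Set.range (g ∘ e₂) := by rw [hc2]; exact hi
            obtain ⟨k, hk⟩ := hmem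
            refine ⟨e₂ k, ?_⟩
            rw [hΦapp, if_neg (by rw [he₂]; omega)]
            rw [show g (e₂ k) = i from hk, hyi, neg_neg]
      rw [hrange]
      exact good_dir hμpos hsum hspan c
  -- the set of transversals is the image under the injective coding map
  have hset : {x : Fin (2 * d) → EuclideanSpace ℝ (Fin d) |
      (∀ i, x i ∈ X i) ∧ posHull (Set.range x) = Set.univ}
      = Φ '' {g | ∃ c, Set.range (g ∘ e₁) = {j | j ≠ c} ∧ Set.range (g ∘ e₂) = {j | j ≠ c}} := by
    ext x
    constructor
    · rintro ⟨hmem, hpos⟩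
      have hex : ∀ j, ∃ a, x j = if (j : ℕ) < d then f a else -f a := by
        intro j
        have hj := hmem j
        rw [hXdef j] at hj
        by_cases hlt : (j : ℕ) < d
        · rw [if_pos hlt] at hj
          obtain ⟨a, ha⟩ := hj
          exact ⟨a, by rw [if_pos hlt, ha]⟩
        · rw [if_neg hlt] at hj
          rw [Set.mem_neg] at hj
          obtain ⟨a, ha⟩ := hj
          refine ⟨a, ?_⟩
          rw [if_neg hlt, ha, neg_neg]
      choose g hg using hex
      have hxg : x = Φ g := funext fun j => by rw [hg j]
      exact ⟨g, (hchar g).mp (by rw [← hxg]; exact hpos), hxg.symm⟩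
    · rintro ⟨g, hgood, rfl⟩
      refine ⟨fun j => ?_, (hchar g).mpr hgood⟩
      rw [hXdef j, hΦapp]
      by_cases hlt : (j : ℕ) < d
      · rw [if_pos hlt, if_pos hlt]
        exact ⟨g j, rfl⟩
      · rw [if_neg hlt, if_neg hlt, Set.mem_neg, neg_neg]
        exact ⟨g j, rfl⟩
  rw [hset, Set.ncard_image_of_injective _ hΦinj]
  exact count_good d e₁ e₂ he₁ he₂
end
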